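/- Networks 1 and 2 imply the conditional independency Y_{b_0} ⊥⊥ Y_{b_0'} | Y_{A_0} if and only if the following implication holds: every tuple of discrete, finitely supported random variables V_1,…,V_n such that (V_i)_{i∈C_1} are mutually independent, (V_i)_{i∈C_2} are mutually independent, and V_{b_j} ≤ι V_{A_j} for j = 1,…,k, satisfies V_{b_0} ≤ι V_{A_0}. -/

import Mathlib

namespace Paper

/-- The probability of an event under a probability mass function. -/
noncomputable def pr {Ω : Type} (μ : PMF Ω) (E : Set Ω) : ENNReal :=
  μ.toOuterMeasure E

/-- Conditional independence `X ⊥⊥ Y | Z`: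
`p(x,y,z) p(z) = p(x,z) p(y,z)` for all `x, y, z`. -/
def CondIndep {Ω α β γ : Type} (μ : PMF Ω) (X : Ω → α) (Y : Ω → β) (Z : Ω → γ) : Prop :=
  ∀ (x : α) (y : β) (z : γ),
    pr μ {ω | X ω = x ∧ Y ω = y ∧ Z ω = z} * pr μ {ω | Z ω = z}
      = pr μ {ω | X ω = x ∧ Z ω = z} * pr μ {ω | Y ω = y ∧ Z ω = z}

/-- Unconditional independence `X ⊥⊥ Y`. -/
def Indep {Ω α β : Type} (μ : PMF Ω) (X : Ω → α) (Y : Ω → β) : Prop :=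
  ∀ (x : α) (y : β),
    pr μ {ω | X ω = x ∧ Y ω = y} = pr μ {ω | X ω = x} * pr μ {ω | Y ω = y}

/-- `X ≥ι Y`: `X` functionally determines `Y` (with probability one). -/
def FunDep {Ω α β : Type} (μ : PMF Ω) (X : Ω → α) (Y : Ω → β) : Prop :=
  ∃ f : α → β, ∀ ω ∈ μ.support, Y ω = f (X ω)

/-- `X =ι Y`: informational equivalence. -/
def InfoEq {Ω α β : Type} (μ : PMF Ω) (X : Ω → α) (Y : Ω → β) : Prop :=
  FunDep μ X Y ∧ FunDep μ Y X

/-- The random variable `X` has finite support. -/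
def FinSupp {Ω α : Type} (μ : PMF Ω) (X : Ω → α) : Prop :=
  (X '' μ.support).Finite

/-- The random variable `X` has support of cardinality at most `ℓ`. -/
def CardLE {Ω α : Type} (μ : PMF Ω) (X : Ω → α) (ℓ : ℕ) : Prop :=
  ∃ s : Finset α, s.card ≤ ℓ ∧ ∀ ω ∈ μ.support, X ω ∈ s

/-- `X` is uniformly distributed with support of cardinality `ℓ`. -/
def UniformCard {Ω α : Type} (μ : PMF Ω) (X : Ω → α) (ℓ : ℕ) : Prop :=
  ∃ S : Finset α, S.card = ℓ ∧ (∀ x ∈ S, pr μ {ω | X ω = x} = (ℓ : ENNReal)⁻¹) ∧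
    ∀ x, x ∉ S → pr μ {ω | X ω = x} = 0

/-- The probability mass function of the random variable `X`. -/
noncomputable def distOf {Ω α : Type} (μ : PMF Ω) (X : Ω → α) : α → ENNReal :=
  fun x => pr μ {ω | X ω = x}

/-- `p ⪰ q` : `p` majorizes `q`, i.e. for every `k`, the sum of the `k` largest values
of `p` is at least the sum of the `k` largest values of `q`. -/
def Majorizes (p q : ℕ → ENNReal) : Prop :=
  ∀ s : Finset ℕ, ∃ t : Finset ℕ, t.card ≤ s.card ∧ ∑ x ∈ s, q x ≤ ∑ x ∈ t, p x

/-- `T` is a sufficient statistic of `X` for `U`: `X ≥ι T` and `U ⊥⊥ X | T`. -/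
def SuffStat {Ω α β γ : Type} (μ : PMF Ω) (X : Ω → α) (U : Ω → β) (T : Ω → γ) : Prop :=
  FunDep μ X T ∧ CondIndep μ U X T

/-- `T` is a minimal sufficient statistic of `X` for `U`. -/
def MinSuffStat {Ω α β γ : Type} (μ : PMF Ω) (X : Ω → α) (U : Ω → β) (T : Ω → γ) : Prop :=
  SuffStat μ X U T ∧
    ∀ (δ : Type) (T' : Ω → δ), SuffStat μ X U T' → FunDep μ T' T

/-- Mutual independence of the subfamily `(V i)_{i ∈ s}`: each `V i` (for `i ∈ s`) is
independent of the joint variable of the others. -/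
def MutIndepOn {Ω ι : Type} {β : ι → Type} (μ : PMF Ω) (V : ∀ i, Ω → β i)
    (s : Finset ι) : Prop :=
  ∀ i ∈ s, Indep μ (V i) (fun ω => fun j : {j // j ∈ s ∧ j ≠ i} => V j.1 ω)

/-- Mutual independence of the whole family `(V i)_i`. -/
def MutIndep {Ω ι : Type} {β : ι → Type} (μ : PMF Ω) (V : ∀ i, Ω → β i) : Prop :=
  ∀ i, Indep μ (V i) (fun ω => fun j : {j // j ≠ i} => V j.1 ω)

/-- Mutual independence of `(V i)_{i ∈ C}` for a list `C` of indices. -/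
def MutIndepL {Ω : Type} (μ : PMF Ω) (V : ℕ → Ω → ℕ) (C : List ℕ) : Prop :=
  ∀ i ∈ C, Indep μ (V i) (fun ω => fun j : {j // j ∈ C ∧ j ≠ i} => V j.1 ω)

/-- The joint random variable `(X a)_{a ∈ A}` for a list `A` of indices. -/
def jointOn {Ω : Type} (X : ℕ → Ω → ℕ) (A : List ℕ) : Ω → ({a : ℕ // a ∈ A} → ℕ) :=
  fun ω a => X a.1 ω

/-- The joint random variable `(T i)_{i ∈ S}` for a finset `S` of indices. -/
def jointFin {Ω ι : Type} {β : ι → Type} (T : ∀ i, Ω → β i) (S : Finset ι) :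
    Ω → ((i : {i // i ∈ S}) → β i.1) :=
  fun ω i => T i.1 ω

/-- The set of parents (in-neighbours) of `w` in the directed graph with edge relation `E`. -/
def parentSet {ν : Type} (E : ν → ν → Prop) (w : ν) : Set ν := {v | E v w}

/-- The set of nodes that are neither descendants nor parents of `w`. -/
def nonDescSet {ν : Type} (E : ν → ν → Prop) (w : ν) : Set ν :=
  {v | ¬ Relation.ReflTransGen E w v ∧ ¬ E v w}

/-- The collection of random variables `(X v)_v` satisfies the Bayesian network structure
with edge relation `E`: each variable is conditionally independent of its
non-descendant non-parent variables given its parent variables. -/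
def SatisfiesBN {Ω ν : Type} {β : ν → Type} (μ : PMF Ω) (X : ∀ v, Ω → β v)
    (E : ν → ν → Prop) : Prop :=
  ∀ w : ν, CondIndep μ (X w)
    (fun ω => fun v : nonDescSet E w => X v.1 ω)
    (fun ω => fun v : parentSet E w => X v.1 ω)

/-- `E` is (the edge list of) a directed acyclic graph on the nodes `{0, …, n-1}`. -/
def IsDAG (n : ℕ) (E : List (ℕ × ℕ)) : Prop :=
  (∀ e ∈ E, e.1 < n ∧ e.2 < n) ∧
    ∀ i : ℕ, ¬ Relation.TransGen (fun a c => (a, c) ∈ E) i i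

/-- The edge relation on `Fin n` determined by an edge list. -/
def edgeRelOn (n : ℕ) (E : List (ℕ × ℕ)) : Fin n → Fin n → Prop :=
  fun i j => ((i : ℕ), (j : ℕ)) ∈ E

/-- `(X_0, …, X_{n-1})` satisfies the Bayesian network given by the edge list `E`. -/
def SatisfiesBNn {Ω : Type} (μ : PMF Ω) (n : ℕ) (X : ℕ → Ω → ℕ)
    (E : List (ℕ × ℕ)) : Prop :=
  SatisfiesBN μ (fun i : Fin n => X (i : ℕ)) (edgeRelOn n E)

/-- `(A, C, B) ∈ I(G_1, …, G_m)`: every collection of finitely supported discrete random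
variables satisfying all the network structures in `Gs` satisfies `X_A ⊥⊥ X_B | X_C`. -/
def ImpliedCI (n : ℕ) (Gs : List (List (ℕ × ℕ))) (A C B : List ℕ) : Prop :=
  ∀ (Ω : Type) (μ : PMF Ω) (X : ℕ → Ω → ℕ),
    (∀ i, i < n → FinSupp μ (X i)) →
    (∀ G ∈ Gs, SatisfiesBNn μ n X G) →
    CondIndep μ (jointOn X A) (jointOn X B) (jointOn X C)

/-- Two lists are disjoint as sets. -/
def DisjointL (A B : List ℕ) : Prop := ∀ a ∈ A, a ∉ B

end Paper
namespace Paper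

/-- The nodes of the two networks: `u i = U_i`, `y i = Y_i`, `z i = Z_i`,
`x i j = X_i^j`. -/
inductive BNode (n k : ℕ) : Type
  | u : Fin n → BNode n k
  | y : Fin n → BNode n k
  | z : Fin n → BNode n k
  | x : Fin n → Fin k → BNode n k

/-- Edge relation of Network 1: `U_i → U_{i'}` for `i ∈ C1, i' ∉ C1` and for
`i, i' ∉ C1` with `i < i'`; and `U_i → Y_i → X_i^1 → ⋯ → X_i^k → Z_i`. -/
def edge1 (n k : ℕ) (C1 : Finset (Fin n)) : BNode n k → BNode n k → Prop :=
  fun v w => match v, w with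
  | .u i, .u i' => (i ∈ C1 ∧ i' ∉ C1) ∨ (i ∉ C1 ∧ i' ∉ C1 ∧ i < i')
  | .u i, .y i' => i = i'
  | .y i, .x i' j => i = i' ∧ (j : ℕ) = 0
  | .x i j, .x i' j' => i = i' ∧ (j' : ℕ) = (j : ℕ) + 1
  | .x i j, .z i' => i = i' ∧ (j : ℕ) = k - 1
  | _, _ => False

/-- Edge relation of Network 2: `U_i → U_{i'}` for `i ∈ C2, i' ∉ C2` and for
`i, i' ∉ C2` with `i < i'`; `U_i → Z_i → Y_i`; `U_i → X_i^j` for `i ≠ b j`; and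
`X_i^j → X_{b_j}^j` for `i ∈ A j`. -/
def edge2 (n k : ℕ) (C2 : Finset (Fin n)) (A : Fin k → Finset (Fin n))
    (b : Fin k → Fin n) : BNode n k → BNode n k → Prop :=
  fun v w => match v, w with
  | .u i, .u i' => (i ∈ C2 ∧ i' ∉ C2) ∨ (i ∉ C2 ∧ i' ∉ C2 ∧ i < i')
  | .u i, .z i' => i = i'
  | .z i, .y i' => i = i'
  | .u i, .x i' j => i = i' ∧ i' ≠ b j
  | .x i j, .x i' j' => j = j' ∧ i' = b j ∧ i ∈ A j
  | _, _ => False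

/-- The joint random variable `U = (U_1, …, U_n)`. -/
def Ujoint {Ω : Type} {n k : ℕ} (X : BNode n k → Ω → ℕ) : Ω → (Fin n → ℕ) :=
  fun ω i => X (.u i) ω

/-- The joint random variable `((X_i^j)_{j=1}^k, Y_i, Z_i)`. -/
def tupleVar {Ω : Type} {n k : ℕ} (X : BNode n k → Ω → ℕ) (i : Fin n) :
    Ω → ((Fin k → ℕ) × ℕ × ℕ) :=
  fun ω => (fun j => X (.x i j) ω, X (.y i) ω, X (.z i) ω)

end Paper
namespace Paper

section Infra

open Classical

variable {Ω α β γ δ : Type} {μ : PMF Ω}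

lemma pr_apply (μ : PMF Ω) (E : Set Ω) : pr μ E = ∑' ω, Set.indicator E μ ω :=
  PMF.toOuterMeasure_apply μ E

lemma pr_mono {E F : Set Ω} (h : E ⊆ F) : pr μ E ≤ pr μ F :=
  μ.toOuterMeasure.mono h

lemma pr_univ (μ : PMF Ω) : pr μ (Set.univ : Set Ω) = 1 := by
  rw [pr_apply]
  simp [Set.indicator_univ, μ.tsum_coe]

lemma pr_le_one (μ : PMF Ω) (E : Set Ω) : pr μ E ≤ 1 := by
  rw [← pr_univ μ]; exact pr_mono (Set.subset_univ E)

lemma pr_ne_top (μ : PMF Ω) (E : Set Ω) : pr μ E ≠ ⊤ :=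
  ne_top_of_le_ne_top ENNReal.one_ne_top (pr_le_one μ E)

lemma pr_eq_zero {E : Set Ω} : pr μ E = 0 ↔ ∀ ω ∈ μ.support, ω ∉ E := by
  rw [pr, PMF.toOuterMeasure_apply_eq_zero_iff, Set.disjoint_left]

lemma pr_pos {E : Set Ω} {ω : Ω} (hω : ω ∈ μ.support) (hE : ω ∈ E) : 0 < pr μ E := by
  rcases eq_or_lt_of_le (zero_le : 0 ≤ pr μ E) with h | h
  · exact absurd hE (pr_eq_zero.mp h.symm ω hω)
  · exact h

lemma exists_mem_of_pr_pos {E : Set Ω} (h : 0 < pr μ E) : ∃ ω ∈ μ.support, ω ∈ E := by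
  by_contra hc
  push_neg at hc
  exact absurd (pr_eq_zero.mpr hc) (ne_of_gt h)

lemma pr_congr {E F : Set Ω} (h : ∀ ω ∈ μ.support, ω ∈ E ↔ ω ∈ F) : pr μ E = pr μ F := by
  rw [pr_apply, pr_apply]
  refine tsum_congr fun ω => ?_
  by_cases hω : ω ∈ μ.support
  · by_cases hE : ω ∈ E
    · rw [Set.indicator_of_mem hE, Set.indicator_of_mem ((h ω hω).mp hE)]
    · rw [Set.indicator_of_notMem hE,
        Set.indicator_of_notMem (fun hF => hE ((h ω hω).mpr hF))]
  · have : μ ω = 0 := PMF.apply_eq_zero_iff μ ω |>.mpr hω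
    by_cases hE : ω ∈ E <;> by_cases hF : ω ∈ F <;>
      simp [Set.indicator, hE, hF, this]

lemma pr_partition (μ : PMF Ω) (f : Ω → β) (E : Set Ω) :
    pr μ E = ∑' b : β, pr μ (E ∩ {ω | f ω = b}) := by
  simp only [pr_apply]
  rw [ENNReal.tsum_comm]
  refine tsum_congr fun ω => ?_
  rw [tsum_eq_single (f ω) ?_]
  · by_cases hE : ω ∈ E
    · rw [Set.indicator_of_mem hE, Set.indicator_of_mem (Set.mem_inter hE (show ω ∈ {ω' | f ω' = f ω} from rfl))]
    · rw [Set.indicator_of_notMem hE, Set.indicator_of_notMem (fun h => hE h.1)]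
  · intro b hb
    exact Set.indicator_of_notMem (fun h => hb h.2.symm) μ

lemma ennreal_cancel {a b c : ENNReal} (hc0 : c ≠ 0) (hct : c ≠ ⊤)
    (h : a * c = b * c) : a = b := by
  have := congrArg (· * c⁻¹) h
  simpa [mul_assoc, ENNReal.mul_inv_cancel hc0 hct] using this

/-- Key workhorse: fiber decomposition of an event along a map of a random variable. -/
lemma pr_map_fiber {X : Ω → α} {X' : Ω → β} {φ : α → β}
    (hφ : ∀ ω ∈ μ.support, X' ω = φ (X ω)) (x' : β) (P : Ω → Prop) :
    pr μ {ω | X' ω = x' ∧ P ω}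
      = ∑' x : α, if φ x = x' then pr μ {ω | X ω = x ∧ P ω} else 0 := by
  rw [pr_partition μ X {ω | X' ω = x' ∧ P ω}]
  refine tsum_congr fun x => ?_
  by_cases hx : φ x = x'
  · rw [if_pos hx]
    refine pr_congr fun ω hω => ?_
    constructor
    · rintro ⟨⟨_, hP⟩, hX⟩; exact ⟨hX, hP⟩
    · rintro ⟨hX, hP⟩
      exact ⟨⟨by rw [hφ ω hω, hX, hx], hP⟩, hX⟩
  · rw [if_neg hx]
    refine pr_eq_zero.mpr fun ω hω => ?_
    rintro ⟨⟨hX', hP⟩, hX⟩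
    rw [hφ ω hω, hX] at hX'
    exact hx hX'

lemma pr_map_fiber' {X : Ω → α} {X' : Ω → β} {φ : α → β}
    (hφ : ∀ ω ∈ μ.support, X' ω = φ (X ω)) (x' : β) :
    pr μ {ω | X' ω = x'}
      = ∑' x : α, if φ x = x' then pr μ {ω | X ω = x} else 0 := by
  have := pr_map_fiber (μ := μ) hφ x' (fun _ => True)
  simpa using this

lemma condIndep_symm {X : Ω → α} {Y : Ω → β} {Z : Ω → γ}
    (h : CondIndep μ X Y Z) : CondIndep μ Y X Z := by
  intro y x z
  have h1 : {ω | Y ω = y ∧ X ω = x ∧ Z ω = z} = {ω | X ω = x ∧ Y ω = y ∧ Z ω = z} := by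
    ext ω; simp only [Set.mem_setOf_eq]; tauto
  rw [h1, h x y z, mul_comm]

lemma ci_of_funDep_right {X : Ω → α} {Y : Ω → β} {Z : Ω → γ}
    (h : FunDep μ Z Y) : CondIndep μ X Y Z := by
  obtain ⟨f, hf⟩ := h
  intro x y z
  by_cases hy : f z = y
  · have e1 : pr μ {ω | X ω = x ∧ Y ω = y ∧ Z ω = z} = pr μ {ω | X ω = x ∧ Z ω = z} := by
      refine pr_congr fun ω hω => ?_
      constructor
      · rintro ⟨h1, _, h3⟩; exact ⟨h1, h3⟩
      · rintro ⟨h1, h3⟩; exact ⟨h1, by rw [hf ω hω, h3, hy], h3⟩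
    have e2 : pr μ {ω | Y ω = y ∧ Z ω = z} = pr μ {ω | Z ω = z} := by
      refine pr_congr fun ω hω => ?_
      constructor
      · rintro ⟨_, h3⟩; exact h3
      · intro h3; exact ⟨by rw [hf ω hω, h3, hy], h3⟩
    rw [e1, e2]
  · have e1 : pr μ {ω | X ω = x ∧ Y ω = y ∧ Z ω = z} = 0 := by
      refine pr_eq_zero.mpr fun ω hω => ?_
      rintro ⟨_, h2, h3⟩
      rw [hf ω hω, h3] at h2; exact hy h2
    have e2 : pr μ {ω | Y ω = y ∧ Z ω = z} = 0 := by
      refine pr_eq_zero.mpr fun ω hω => ?_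
      rintro ⟨h2, h3⟩
      rw [hf ω hω, h3] at h2; exact hy h2
    rw [e1, e2, zero_mul, mul_zero]

lemma ci_of_funDep_left {X : Ω → α} {Y : Ω → β} {Z : Ω → γ}
    (h : FunDep μ Z X) : CondIndep μ X Y Z :=
  condIndep_symm (ci_of_funDep_right h)

lemma ci_map_left {X : Ω → α} {Y : Ω → β} {Z : Ω → γ} {X' : Ω → δ} {φ : α → δ}
    (h : CondIndep μ X Y Z) (hφ : ∀ ω ∈ μ.support, X' ω = φ (X ω)) :
    CondIndep μ X' Y Z := by
  intro x' y z
  rw [pr_map_fiber (μ := μ) hφ x' (fun ω => Y ω = y ∧ Z ω = z),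
    pr_map_fiber (μ := μ) hφ x' (fun ω => Z ω = z),
    ← ENNReal.tsum_mul_right, ← ENNReal.tsum_mul_right]
  refine tsum_congr fun x => ?_
  by_cases hx : φ x = x'
  · rw [if_pos hx, if_pos hx, h x y z]
  · rw [if_neg hx, if_neg hx, zero_mul, zero_mul]

lemma ci_map_right {X : Ω → α} {Y : Ω → β} {Z : Ω → γ} {Y' : Ω → δ} {φ : β → δ}
    (h : CondIndep μ X Y Z) (hφ : ∀ ω ∈ μ.support, Y' ω = φ (Y ω)) :
    CondIndep μ X Y' Z :=
  condIndep_symm (ci_map_left (condIndep_symm h) hφ)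

lemma ci_congr_cond {X : Ω → α} {Y : Ω → β} {Z : Ω → γ} {Z' : Ω → δ}
    {φ : γ → δ} {ψ : δ → γ}
    (h : CondIndep μ X Y Z)
    (hφ : ∀ ω ∈ μ.support, Z' ω = φ (Z ω)) (hψ : ∀ ω ∈ μ.support, Z ω = ψ (Z' ω)) :
    CondIndep μ X Y Z' := by
  intro x y z'
  by_cases hz' : ∃ ω₀ ∈ μ.support, Z' ω₀ = z'
  · obtain ⟨ω₀, hω₀, hz₀⟩ := hz'
    have key : ∀ ω ∈ μ.support, Z' ω = z' ↔ Z ω = ψ z' := by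
      intro ω hω
      constructor
      · intro hh; rw [hψ ω hω, hh]
      · intro hh
        have h1 : Z ω₀ = ψ z' := by rw [hψ ω₀ hω₀, hz₀]
        rw [hφ ω hω, hh, ← h1, ← hφ ω₀ hω₀, hz₀]
    have e1 : pr μ {ω | X ω = x ∧ Y ω = y ∧ Z' ω = z'}
        = pr μ {ω | X ω = x ∧ Y ω = y ∧ Z ω = ψ z'} := by
      refine pr_congr fun ω hω => ?_
      simp only [Set.mem_setOf_eq]
      rw [key ω hω]
    have e2 : pr μ {ω | Z' ω = z'} = pr μ {ω | Z ω = ψ z'} := by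
      refine pr_congr fun ω hω => ?_
      simp only [Set.mem_setOf_eq]
      exact key ω hω
    have e3 : pr μ {ω | X ω = x ∧ Z' ω = z'} = pr μ {ω | X ω = x ∧ Z ω = ψ z'} := by
      refine pr_congr fun ω hω => ?_
      simp only [Set.mem_setOf_eq]
      rw [key ω hω]
    have e4 : pr μ {ω | Y ω = y ∧ Z' ω = z'} = pr μ {ω | Y ω = y ∧ Z ω = ψ z'} := by
      refine pr_congr fun ω hω => ?_
      simp only [Set.mem_setOf_eq]
      rw [key ω hω]
    rw [e1, e2, e3, e4]
    exact h x y (ψ z')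
  · push_neg at hz'
    have e1 : pr μ {ω | X ω = x ∧ Y ω = y ∧ Z' ω = z'} = 0 :=
      pr_eq_zero.mpr fun ω hω hm => hz' ω hω hm.2.2
    have e3 : pr μ {ω | X ω = x ∧ Z' ω = z'} = 0 :=
      pr_eq_zero.mpr fun ω hω hm => hz' ω hω hm.2
    rw [e1, e3, zero_mul, zero_mul]

end Infra

section Infra2

open Classical

variable {Ω α β γ δ : Type} {μ : PMF Ω}

lemma pr_empty (μ : PMF Ω) : pr μ (∅ : Set Ω) = 0 :=
  pr_eq_zero.mpr fun _ _ h => h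

lemma ci_weak_union {X : Ω → α} {Y : Ω → β} {W : Ω → δ} {Z : Ω → γ}
    (h : CondIndep μ X (fun ω => (Y ω, W ω)) Z) :
    CondIndep μ X Y (fun ω => (Z ω, W ω)) := by
  have h2 : CondIndep μ X W Z := ci_map_right h (φ := Prod.snd) (fun ω _ => rfl)
  intro x y zw
  obtain ⟨z, w⟩ := zw
  have e1 : {ω | X ω = x ∧ Y ω = y ∧ (Z ω, W ω) = (z, w)}
      = {ω | X ω = x ∧ Y ω = y ∧ W ω = w ∧ Z ω = z} := by
    ext ω; simp only [Set.mem_setOf_eq, Prod.mk.injEq]; try tauto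
  have e2 : {ω | (Z ω, W ω) = (z, w)} = {ω | W ω = w ∧ Z ω = z} := by
    ext ω; simp only [Set.mem_setOf_eq, Prod.mk.injEq]; try tauto
  have e3 : {ω | X ω = x ∧ (Z ω, W ω) = (z, w)} = {ω | X ω = x ∧ W ω = w ∧ Z ω = z} := by
    ext ω; simp only [Set.mem_setOf_eq, Prod.mk.injEq]; try tauto
  have e4 : {ω | Y ω = y ∧ (Z ω, W ω) = (z, w)} = {ω | Y ω = y ∧ W ω = w ∧ Z ω = z} := by
    ext ω; simp only [Set.mem_setOf_eq, Prod.mk.injEq]; try tauto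
  rw [e1, e2, e3, e4]
  have h1 := h x (y, w) z
  have e5 : {ω | X ω = x ∧ (Y ω, W ω) = (y, w) ∧ Z ω = z}
      = {ω | X ω = x ∧ Y ω = y ∧ W ω = w ∧ Z ω = z} := by
    ext ω; simp only [Set.mem_setOf_eq, Prod.mk.injEq]; try tauto
  have e6 : {ω | (Y ω, W ω) = (y, w) ∧ Z ω = z} = {ω | Y ω = y ∧ W ω = w ∧ Z ω = z} := by
    ext ω; simp only [Set.mem_setOf_eq, Prod.mk.injEq]; try tauto
  rw [e5, e6] at h1
  have h2' := h2 x w z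
  set A := pr μ {ω | X ω = x ∧ Y ω = y ∧ W ω = w ∧ Z ω = z} with hA
  set C := pr μ {ω | W ω = w ∧ Z ω = z} with hC
  set B := pr μ {ω | X ω = x ∧ W ω = w ∧ Z ω = z} with hB
  set D := pr μ {ω | Y ω = y ∧ W ω = w ∧ Z ω = z} with hD
  set pz := pr μ {ω | Z ω = z} with hpz
  set pxz := pr μ {ω | X ω = x ∧ Z ω = z} with hpxz
  -- h1 : A * pz = pxz * D ; h2' : B * pz = pxz * C
  by_cases hz : pz = 0
  · have hA0 : A = 0 := by
      rw [hA]
      refine le_antisymm (le_trans (pr_mono ?_) (le_of_eq hz)) zero_le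
      intro ω hω; exact hω.2.2.2
    have hB0 : B = 0 := by
      rw [hB]
      refine le_antisymm (le_trans (pr_mono ?_) (le_of_eq hz)) zero_le
      intro ω hω; exact hω.2.2
    rw [hA0, hB0, zero_mul, zero_mul]
  · apply ennreal_cancel hz (by rw [hpz]; exact pr_ne_top μ _)
    calc A * C * pz = (A * pz) * C := by ring
    _ = (pxz * D) * C := by rw [h1]
    _ = D * (pxz * C) := by ring
    _ = D * (B * pz) := by rw [h2']
    _ = B * D * pz := by ring

lemma ci_contraction {X : Ω → α} {Y : Ω → β} {W : Ω → δ} {Z : Ω → γ}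
    (h1 : CondIndep μ X Y Z) (h2 : CondIndep μ X W (fun ω => (Y ω, Z ω))) :
    CondIndep μ X (fun ω => (Y ω, W ω)) Z := by
  intro x yw z
  obtain ⟨y, w⟩ := yw
  have e1 : {ω | X ω = x ∧ (Y ω, W ω) = (y, w) ∧ Z ω = z}
      = {ω | X ω = x ∧ W ω = w ∧ Y ω = y ∧ Z ω = z} := by
    ext ω; simp only [Set.mem_setOf_eq, Prod.mk.injEq]; try tauto
  have e2 : {ω | (Y ω, W ω) = (y, w) ∧ Z ω = z} = {ω | W ω = w ∧ Y ω = y ∧ Z ω = z} := by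
    ext ω; simp only [Set.mem_setOf_eq, Prod.mk.injEq]; try tauto
  rw [e1, e2]
  have g2 := h2 x w (y, z)
  beta_reduce at g2
  have e3 : {ω | X ω = x ∧ W ω = w ∧ (Y ω, Z ω) = (y, z)}
      = {ω | X ω = x ∧ W ω = w ∧ Y ω = y ∧ Z ω = z} := by
    ext ω; simp only [Set.mem_setOf_eq, Prod.mk.injEq]; try tauto
  have e4 : {ω | (Y ω, Z ω) = (y, z)} = {ω | Y ω = y ∧ Z ω = z} := by
    ext ω; simp only [Set.mem_setOf_eq, Prod.mk.injEq]; try tauto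
  have e5 : {ω | W ω = w ∧ (Y ω, Z ω) = (y, z)} = {ω | W ω = w ∧ Y ω = y ∧ Z ω = z} := by
    ext ω; simp only [Set.mem_setOf_eq, Prod.mk.injEq]; try tauto
  have e6 : {ω | X ω = x ∧ (Y ω, Z ω) = (y, z)} = {ω | X ω = x ∧ Y ω = y ∧ Z ω = z} := by
    ext ω; simp only [Set.mem_setOf_eq, Prod.mk.injEq]; try tauto
  rw [e3, e4, e5, e6] at g2
  have g1 := h1 x y z
  set A := pr μ {ω | X ω = x ∧ W ω = w ∧ Y ω = y ∧ Z ω = z} with hA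
  set pyz := pr μ {ω | Y ω = y ∧ Z ω = z} with hpyz
  set pxyz := pr μ {ω | X ω = x ∧ Y ω = y ∧ Z ω = z} with hpxyz
  set D := pr μ {ω | W ω = w ∧ Y ω = y ∧ Z ω = z} with hD
  set pz := pr μ {ω | Z ω = z} with hpz
  set pxz := pr μ {ω | X ω = x ∧ Z ω = z} with hpxz
  -- g2 : A * pyz = pxyz * D ; g1 : pxyz * pz = pxz * pyz
  -- goal : A * pz = pxz * D
  by_cases hyz : pyz = 0
  · have hA0 : A = 0 := by
      rw [hA]
      refine le_antisymm (le_trans (pr_mono ?_) (le_of_eq hyz)) zero_le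
      intro ω hω; exact ⟨hω.2.2.1, hω.2.2.2⟩
    have hD0 : D = 0 := by
      rw [hD]
      refine le_antisymm (le_trans (pr_mono ?_) (le_of_eq hyz)) zero_le
      intro ω hω; exact ⟨hω.2.1, hω.2.2⟩
    rw [hA0, hD0, zero_mul, mul_zero]
  · apply ennreal_cancel hyz (by rw [hpyz]; exact pr_ne_top μ _)
    calc A * pz * pyz = (A * pyz) * pz := by ring
    _ = (pxyz * D) * pz := by rw [g2]
    _ = (pxyz * pz) * D := by ring
    _ = (pxz * pyz) * D := by rw [g1]
    _ = pxz * D * pyz := by ring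

lemma indep_symm {X : Ω → α} {Y : Ω → β} (h : Indep μ X Y) : Indep μ Y X := by
  intro y x
  have e : {ω | Y ω = y ∧ X ω = x} = {ω | X ω = x ∧ Y ω = y} := by
    ext ω; simp only [Set.mem_setOf_eq]; tauto
  rw [e, h x y, mul_comm]

lemma indep_of_ci_const {X : Ω → α} {Y : Ω → β} {Z : Ω → γ}
    (hc : ∀ ω ω', Z ω = Z ω') (h : CondIndep μ X Y Z) : Indep μ X Y := by
  obtain ⟨ω₀, hω₀⟩ := μ.support_nonempty
  intro x y
  have h' := h x y (Z ω₀)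
  have e1 : {ω | X ω = x ∧ Y ω = y ∧ Z ω = Z ω₀} = {ω | X ω = x ∧ Y ω = y} := by
    ext ω; simp only [Set.mem_setOf_eq]
    exact ⟨fun hh => ⟨hh.1, hh.2.1⟩, fun hh => ⟨hh.1, hh.2, hc ω ω₀⟩⟩
  have e2 : {ω | Z ω = Z ω₀} = (Set.univ : Set Ω) := by
    ext ω; simp only [Set.mem_setOf_eq, Set.mem_univ, iff_true]; exact hc ω ω₀
  have e3 : {ω | X ω = x ∧ Z ω = Z ω₀} = {ω | X ω = x} := by
    ext ω; simp only [Set.mem_setOf_eq]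
    exact ⟨fun hh => hh.1, fun hh => ⟨hh, hc ω ω₀⟩⟩
  have e4 : {ω | Y ω = y ∧ Z ω = Z ω₀} = {ω | Y ω = y} := by
    ext ω; simp only [Set.mem_setOf_eq]
    exact ⟨fun hh => hh.1, fun hh => ⟨hh, hc ω ω₀⟩⟩
  rw [e1, e2, e3, e4, pr_univ, mul_one] at h'
  exact h'

lemma ci_of_indep_const {X : Ω → α} {Y : Ω → β} {Z : Ω → γ}
    (hc : ∀ ω ω', Z ω = Z ω') (h : Indep μ X Y) : CondIndep μ X Y Z := by
  obtain ⟨ω₀, hω₀⟩ := μ.support_nonempty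
  intro x y z
  by_cases hz : z = Z ω₀
  · subst hz
    have e1 : {ω | X ω = x ∧ Y ω = y ∧ Z ω = Z ω₀} = {ω | X ω = x ∧ Y ω = y} := by
      ext ω; simp only [Set.mem_setOf_eq]
      exact ⟨fun hh => ⟨hh.1, hh.2.1⟩, fun hh => ⟨hh.1, hh.2, hc ω ω₀⟩⟩
    have e2 : {ω | Z ω = Z ω₀} = (Set.univ : Set Ω) := by
      ext ω; simp only [Set.mem_setOf_eq, Set.mem_univ, iff_true]; exact hc ω ω₀
    have e3 : {ω | X ω = x ∧ Z ω = Z ω₀} = {ω | X ω = x} := by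
      ext ω; simp only [Set.mem_setOf_eq]
      exact ⟨fun hh => hh.1, fun hh => ⟨hh, hc ω ω₀⟩⟩
    have e4 : {ω | Y ω = y ∧ Z ω = Z ω₀} = {ω | Y ω = y} := by
      ext ω; simp only [Set.mem_setOf_eq]
      exact ⟨fun hh => hh.1, fun hh => ⟨hh, hc ω ω₀⟩⟩
    rw [e1, e2, e3, e4, pr_univ, mul_one, h x y]
  · have hzz : ∀ ω, Z ω ≠ z := fun ω hh => hz (hh ▸ (hc ω₀ ω) ▸ rfl)
    have e1 : {ω | X ω = x ∧ Y ω = y ∧ Z ω = z} = (∅ : Set Ω) := by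
      ext ω; simp only [Set.mem_setOf_eq, Set.mem_empty_iff_false, iff_false]
      exact fun hh => hzz ω hh.2.2
    have e3 : {ω | X ω = x ∧ Z ω = z} = (∅ : Set Ω) := by
      ext ω; simp only [Set.mem_setOf_eq, Set.mem_empty_iff_false, iff_false]
      exact fun hh => hzz ω hh.2
    rw [e1, e3, pr_empty, zero_mul, zero_mul]

lemma indep_map_left {X : Ω → α} {Y : Ω → β} {X' : Ω → δ} {φ : α → δ}
    (h : Indep μ X Y) (hφ : ∀ ω ∈ μ.support, X' ω = φ (X ω)) : Indep μ X' Y := by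
  intro x' y
  rw [pr_map_fiber (μ := μ) hφ x' (fun ω => Y ω = y), pr_map_fiber' (μ := μ) hφ x',
    ← ENNReal.tsum_mul_right]
  refine tsum_congr fun x => ?_
  by_cases hx : φ x = x'
  · rw [if_pos hx, if_pos hx, h x y]
  · rw [if_neg hx, if_neg hx, zero_mul]

lemma indep_map_right {X : Ω → α} {Y : Ω → β} {Y' : Ω → δ} {φ : β → δ}
    (h : Indep μ X Y) (hφ : ∀ ω ∈ μ.support, Y' ω = φ (Y ω)) : Indep μ X Y' :=
  indep_symm (indep_map_left (indep_symm h) hφ)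

lemma funDep_of_fiber_const {W : Ω → α} {V : Ω → β}
    (h : ∀ ω ∈ μ.support, ∀ ω' ∈ μ.support, W ω = W ω' → V ω = V ω') :
    FunDep μ W V := by
  obtain ⟨ω₀, hω₀⟩ := μ.support_nonempty
  refine ⟨fun w => if hw : ∃ ω, ω ∈ μ.support ∧ W ω = w then V hw.choose else V ω₀, ?_⟩
  intro ω hω
  have hex : ∃ ω', ω' ∈ μ.support ∧ W ω' = W ω := ⟨ω, hω, rfl⟩
  beta_reduce
  rw [dif_pos hex]
  exact h ω hω _ hex.choose_spec.1 hex.choose_spec.2.symm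

lemma funDep_comp {W : Ω → α} {V : Ω → β} {V' : Ω → γ} {g : β → γ}
    (h : FunDep μ W V) (hg : ∀ ω ∈ μ.support, V' ω = g (V ω)) : FunDep μ W V' := by
  obtain ⟨f, hf⟩ := h
  exact ⟨g ∘ f, fun ω hω => by rw [hg ω hω, hf ω hω]; rfl⟩

lemma funDep_of_selfCI {P : Ω → α} {Q : Ω → β} {R : Ω → γ} {V : Ω → δ}
    (h : CondIndep μ P Q R) (hP : FunDep μ P V) (hQ : FunDep μ Q V) :
    FunDep μ R V := by
  obtain ⟨φ, hφ⟩ := hP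
  obtain ⟨ψ, hψ⟩ := hQ
  apply funDep_of_fiber_const
  intro ω hω ω' hω' hR
  have h1 : 0 < pr μ {ω₁ | P ω₁ = P ω ∧ R ω₁ = R ω} := pr_pos hω ⟨rfl, rfl⟩
  have h2 : 0 < pr μ {ω₁ | Q ω₁ = Q ω' ∧ R ω₁ = R ω} := pr_pos hω' ⟨rfl, hR.symm⟩
  have hci := h (P ω) (Q ω') (R ω)
  have hpos : 0 < pr μ {ω₁ | P ω₁ = P ω ∧ Q ω₁ = Q ω' ∧ R ω₁ = R ω} := by
    by_contra hc
    push_neg at hc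
    have hc0 : pr μ {ω₁ | P ω₁ = P ω ∧ Q ω₁ = Q ω' ∧ R ω₁ = R ω} = 0 :=
      le_antisymm hc zero_le
    rw [hc0, zero_mul] at hci
    exact absurd hci.symm (ne_of_gt (ENNReal.mul_pos (ne_of_gt h1) (ne_of_gt h2)))
  obtain ⟨ω₁, hω₁, hm⟩ := exists_mem_of_pr_pos hpos
  obtain ⟨hP1, hQ1, _⟩ := hm
  calc V ω = φ (P ω) := hφ ω hω
  _ = φ (P ω₁) := by rw [hP1]
  _ = V ω₁ := (hφ ω₁ hω₁).symm
  _ = ψ (Q ω₁) := hψ ω₁ hω₁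
  _ = ψ (Q ω') := by rw [hQ1]
  _ = V ω' := (hψ ω' hω').symm

lemma posterior_exchange {U : Ω → γ} {A : Ω → α} {B : Ω → β}
    (hAB : CondIndep μ U A B) (hBA : CondIndep μ U B A) {ω : Ω}
    (hω : ω ∈ μ.support) (u : γ) :
    pr μ {ω₁ | U ω₁ = u ∧ B ω₁ = B ω} * pr μ {ω₁ | A ω₁ = A ω}
      = pr μ {ω₁ | U ω₁ = u ∧ A ω₁ = A ω} * pr μ {ω₁ | B ω₁ = B ω} := by
  have ht : 0 < pr μ {ω₁ | A ω₁ = A ω ∧ B ω₁ = B ω} := pr_pos hω ⟨rfl, rfl⟩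
  have h1 := hAB u (A ω) (B ω)
  have h2 := hBA u (B ω) (A ω)
  have e1 : {ω₁ | U ω₁ = u ∧ B ω₁ = B ω ∧ A ω₁ = A ω}
      = {ω₁ | U ω₁ = u ∧ A ω₁ = A ω ∧ B ω₁ = B ω} := by
    ext ω₁; simp only [Set.mem_setOf_eq]; tauto
  have e2 : {ω₁ | B ω₁ = B ω ∧ A ω₁ = A ω} = {ω₁ | A ω₁ = A ω ∧ B ω₁ = B ω} := by
    ext ω₁; simp only [Set.mem_setOf_eq]; tauto
  rw [e1, e2] at h2
  set T := pr μ {ω₁ | U ω₁ = u ∧ A ω₁ = A ω ∧ B ω₁ = B ω} with hT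
  set t := pr μ {ω₁ | A ω₁ = A ω ∧ B ω₁ = B ω} with htd
  set prUB := pr μ {ω₁ | U ω₁ = u ∧ B ω₁ = B ω} with hprUB
  set prUA := pr μ {ω₁ | U ω₁ = u ∧ A ω₁ = A ω} with hprUA
  set prA := pr μ {ω₁ | A ω₁ = A ω} with hprA
  set prB := pr μ {ω₁ | B ω₁ = B ω} with hprB
  -- h1 : T * prB = prUB * t ; h2 : T * prA = prUA * t
  apply ennreal_cancel (ne_of_gt ht) (by rw [htd]; exact pr_ne_top μ _)
  calc prUB * prA * t = (prUB * t) * prA := by ring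
  _ = (T * prB) * prA := by rw [h1]
  _ = (T * prA) * prB := by ring
  _ = (prUA * t) * prB := by rw [h2]
  _ = prUA * prB * t := by ring

end Infra2

section Jmach

open Classical

noncomputable instance {n k : ℕ} : DecidableEq (BNode n k) := fun _ _ => Classical.dec _

/-- The joint variable over a finite set of nodes, represented as a masked total function. -/
noncomputable def Jnt {Ω : Type} {n k : ℕ} (X : BNode n k → Ω → ℕ)
    (S : Finset (BNode n k)) : Ω → (BNode n k → ℕ) :=
  fun ω v => if v ∈ S then X v ω else 0

variable {Ω α γ' : Type} {n k : ℕ} {μ : PMF Ω} {X : BNode n k → Ω → ℕ}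

lemma jnt_mono {S T : Finset (BNode n k)} (h : S ⊆ T) (ω : Ω) :
    Jnt X S ω = (fun g v => if v ∈ S then g v else 0) (Jnt X T ω) := by
  funext v
  by_cases hv : v ∈ S
  · simp [Jnt, hv, h hv]
  · simp [Jnt, hv]

lemma jnt_pair_split (S T : Finset (BNode n k)) (ω : Ω) :
    (Jnt X S ω, Jnt X T ω)
      = (fun g => (fun v => if v ∈ S then g v else 0, fun v => if v ∈ T then g v else 0))
          (Jnt X (S ∪ T) ω) := by
  simp only [Prod.mk.injEq]
  constructor <;> funext v <;> by_cases hv : v ∈ S <;> by_cases hv' : v ∈ T <;>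
    simp [Jnt, hv, hv']

lemma jnt_union_of_pair (S T : Finset (BNode n k)) (ω : Ω) :
    Jnt X (S ∪ T) ω
      = (fun p : (BNode n k → ℕ) × (BNode n k → ℕ) => fun v => if v ∈ S then p.1 v else p.2 v)
          ((Jnt X S ω, Jnt X T ω)) := by
  funext v
  by_cases hv : v ∈ S <;> by_cases hv' : v ∈ T <;> simp [Jnt, hv, hv']

lemma jnt_single_val (v : BNode n k) (ω : Ω) :
    X v ω = (fun g : BNode n k → ℕ => g v) (Jnt X {v} ω) := by
  simp [Jnt]

lemma jnt_single_of (v : BNode n k) (ω : Ω) :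
    Jnt X {v} ω = (fun a w => if w = v then a else 0) (X v ω) := by
  funext w
  by_cases hw : w = v
  · subst hw; simp [Jnt]
  · simp [Jnt, hw]

lemma jci_decomp {A : Ω → α} {S S' T : Finset (BNode n k)}
    (h : CondIndep μ A (Jnt X S) (Jnt X T)) (hsub : S' ⊆ S) :
    CondIndep μ A (Jnt X S') (Jnt X T) :=
  ci_map_right h (φ := fun g v => if v ∈ S' then g v else 0) (fun ω _ => jnt_mono hsub ω)

lemma jci_weak_union {A : Ω → α} {S S' T : Finset (BNode n k)}
    (h : CondIndep μ A (Jnt X (S ∪ S')) (Jnt X T)) :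
    CondIndep μ A (Jnt X S) (Jnt X (T ∪ S')) := by
  have h1 : CondIndep μ A (fun ω => (Jnt X S ω, Jnt X S' ω)) (Jnt X T) :=
    ci_map_right h
      (φ := fun g => (fun v => if v ∈ S then g v else 0, fun v => if v ∈ S' then g v else 0))
      (fun ω _ => jnt_pair_split S S' ω)
  have h2 := ci_weak_union h1
  exact ci_congr_cond h2
    (φ := fun p : (BNode n k → ℕ) × (BNode n k → ℕ) => fun v => if v ∈ T then p.1 v else p.2 v)
    (ψ := fun g => (fun v => if v ∈ T then g v else 0, fun v => if v ∈ S' then g v else 0))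
    (fun ω _ => jnt_union_of_pair T S' ω)
    (fun ω _ => jnt_pair_split T S' ω)

lemma jci_contraction {A : Ω → α} {S S' T : Finset (BNode n k)}
    (h1 : CondIndep μ A (Jnt X S) (Jnt X T))
    (h2 : CondIndep μ A (Jnt X S') (Jnt X (S ∪ T))) :
    CondIndep μ A (Jnt X (S ∪ S')) (Jnt X T) := by
  have h2' : CondIndep μ A (Jnt X S') (fun ω => (Jnt X S ω, Jnt X T ω)) :=
    ci_congr_cond h2
      (φ := fun g => (fun v => if v ∈ S then g v else 0, fun v => if v ∈ T then g v else 0))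
      (ψ := fun p : (BNode n k → ℕ) × (BNode n k → ℕ) => fun v => if v ∈ S then p.1 v else p.2 v)
      (fun ω _ => jnt_pair_split S T ω) (fun ω _ => jnt_union_of_pair S T ω)
  have h3 := ci_contraction h1 h2'
  exact ci_map_right h3
    (φ := fun p : (BNode n k → ℕ) × (BNode n k → ℕ) => fun v => if v ∈ S then p.1 v else p.2 v)
    (fun ω _ => jnt_union_of_pair S S' ω)

lemma jci_congr {A : Ω → α} {S T T' : Finset (BNode n k)} (hT : T = T')
    (h : CondIndep μ A (Jnt X S) (Jnt X T)) : CondIndep μ A (Jnt X S) (Jnt X T') := hT ▸ h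

lemma ci_jnt_single_right {A : Ω → α} {C : Ω → γ'} {v : BNode n k}
    (h : CondIndep μ A (Jnt X {v}) C) : CondIndep μ A (X v) C :=
  ci_map_right h (φ := fun g : BNode n k → ℕ => g v) (fun ω _ => jnt_single_val v ω)

lemma ci_single_jnt_right {A : Ω → α} {C : Ω → γ'} {v : BNode n k}
    (h : CondIndep μ A (X v) C) : CondIndep μ A (Jnt X {v}) C :=
  ci_map_right h (φ := fun a w => if w = v then a else 0) (fun ω _ => jnt_single_of v ω)

lemma ci_jnt_single_cond {A : Ω → α} {B : Ω → γ'} {v : BNode n k}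
    (h : CondIndep μ A B (Jnt X {v})) : CondIndep μ A B (X v) :=
  ci_congr_cond h (φ := fun g : BNode n k → ℕ => g v) (ψ := fun a w => if w = v then a else 0)
    (fun ω _ => jnt_single_val v ω) (fun ω _ => jnt_single_of v ω)

lemma ci_single_jnt_cond {A : Ω → α} {B : Ω → γ'} {v : BNode n k}
    (h : CondIndep μ A B (X v)) : CondIndep μ A B (Jnt X {v}) :=
  ci_congr_cond h (φ := fun a w => if w = v then a else 0) (ψ := fun g : BNode n k → ℕ => g v)
    (fun ω _ => jnt_single_of v ω) (fun ω _ => jnt_single_val v ω)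

/-- Extraction of a conditional independence from a Bayesian-network constraint. -/
lemma bn_extract {E : BNode n k → BNode n k → Prop} (hBN : SatisfiesBN μ X E)
    (w : BNode n k) {S T : Finset (BNode n k)}
    (hS : ∀ v ∈ S, (v : BNode n k) ∈ nonDescSet E w)
    (hT : ∀ v, v ∈ T ↔ v ∈ parentSet E w) :
    CondIndep μ (X w) (Jnt X S) (Jnt X T) := by
  have h0 := hBN w
  have h1 : CondIndep μ (X w) (Jnt X S)
      (fun ω => fun v : parentSet E w => X v.1 ω) :=
    ci_map_right h0 (φ := fun g v => if h : v ∈ S then g ⟨v, hS v h⟩ else 0)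
      (fun ω _ => by
        funext v
        by_cases h : v ∈ S
        · simp [Jnt, h]
        · simp [Jnt, h])
  refine ci_congr_cond h1
    (φ := fun g v => if h : v ∈ T then g ⟨v, (hT v).mp h⟩ else 0)
    (ψ := fun g => fun v : parentSet E w => g v.1) (fun ω _ => ?_) (fun ω _ => ?_)
  · funext v
    by_cases h : v ∈ T
    · simp [Jnt, h]
    · simp [Jnt, h]
  · funext v
    simp [Jnt, (hT v.1).mpr v.2]

end Jmach

section Graphs

variable {n k : ℕ}

/-- The index of a node. -/
def bidx : BNode n k → Fin n
  | .u i => i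
  | .y i => i
  | .z i => i
  | .x i _ => i

/-- The chain `Y_i → X_i^1 → ⋯ → X_i^k → Z_i` of network 1, as a function of position. -/
def cnode (i : Fin n) (m : ℕ) : BNode n k :=
  if h : 1 ≤ m ∧ m ≤ k then .x i ⟨m - 1, by omega⟩ else if m = 0 then .y i else .z i

lemma cnode_zero (i : Fin n) : (cnode i 0 : BNode n k) = .y i := by simp [cnode]

lemma cnode_x (i : Fin n) {m : ℕ} (h1 : 1 ≤ m) (h2 : m ≤ k) :
    (cnode i m : BNode n k) = .x i ⟨m - 1, by omega⟩ := by simp [cnode, h1, h2]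

lemma cnode_z (i : Fin n) {m : ℕ} (h : k + 1 ≤ m) (hk : 1 ≤ k) :
    (cnode i m : BNode n k) = .z i := by
  have : ¬(1 ≤ m ∧ m ≤ k) := by omega
  have h2 : ¬(m = 0) := by omega
  simp [cnode, this, h2]

lemma bidx_cnode (i : Fin n) (m : ℕ) : bidx (cnode i m : BNode n k) = i := by
  unfold cnode
  split
  · rfl
  · split <;> rfl

/-- Position decoding for chain nodes. -/
def cidx : BNode n k → ℕ
  | .y _ => 0
  | .x _ j => (j : ℕ) + 1
  | .z _ => k + 1
  | .u _ => 0

lemma cidx_cnode (i : Fin n) {m : ℕ} (hm : m ≤ k + 1) :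
    cidx (cnode i m : BNode n k) = m := by
  unfold cnode
  split
  · next hc => simp only [cidx]; omega
  · next hc =>
    split
    · next h0 => simp only [cidx]; omega
    · next h0 => simp only [cidx]; omega

lemma cnode_inj (i : Fin n) {m m' : ℕ} (hm : m ≤ k + 1) (hm' : m' ≤ k + 1)
    (h : (cnode i m : BNode n k) = cnode i m') : m = m' := by
  rw [← cidx_cnode i hm, ← cidx_cnode i hm', h]

lemma reach_inv {V : Type} {E : V → V → Prop} {P : V → Prop}
    (hstep : ∀ a b, P a → E a b → P b) {a b : V}
    (h : Relation.ReflTransGen E a b) (ha : P a) : P b := by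
  induction h with
  | refl => exact ha
  | tail _ e ih => exact hstep _ _ ih e

section Net1

variable (C1 : Finset (Fin n))

lemma r1_y {i : Fin n} {v : BNode n k}
    (h : Relation.ReflTransGen (edge1 n k C1) (.y i) v) :
    v = .y i ∨ (∃ j, v = .x i j) ∨ v = .z i := by
  refine reach_inv (P := fun w : BNode n k => w = .y i ∨ (∃ j, w = .x i j) ∨ w = .z i)
    ?_ h (Or.inl rfl)
  rintro a b (rfl | ⟨j, rfl⟩ | rfl) e
  · cases b <;> simp [edge1] at e
    case x i' j' => exact Or.inr (Or.inl ⟨j', by rw [e.1]⟩)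
  · cases b <;> simp [edge1] at e
    case x i' j' => exact Or.inr (Or.inl ⟨j', by rw [e.1]⟩)
    case z i' => exact Or.inr (Or.inr (by rw [e.1]))
  · cases b <;> simp [edge1] at e

lemma r1_x {i : Fin n} {j : Fin k} {v : BNode n k}
    (h : Relation.ReflTransGen (edge1 n k C1) (.x i j) v) :
    (∃ j' : Fin k, v = .x i j' ∧ (j : ℕ) ≤ (j' : ℕ)) ∨ v = .z i := by
  refine reach_inv
    (P := fun w : BNode n k => (∃ j' : Fin k, w = .x i j' ∧ (j : ℕ) ≤ (j' : ℕ)) ∨ w = .z i)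
    ?_ h (Or.inl ⟨j, rfl, le_refl _⟩)
  rintro a b (⟨j', rfl, hj'⟩ | rfl) e
  · cases b <;> simp [edge1] at e
    case x i'' j'' => exact Or.inl ⟨j'', by rw [e.1], by omega⟩
    case z i'' => exact Or.inr (by rw [e.1])
  · cases b <;> simp [edge1] at e

lemma r1_z {i : Fin n} {v : BNode n k}
    (h : Relation.ReflTransGen (edge1 n k C1) (.z i) v) : v = .z i := by
  refine reach_inv (P := fun w : BNode n k => w = .z i) ?_ h rfl
  rintro a b rfl e
  cases b <;> simp [edge1] at e

lemma r1_u {i : Fin n} {v : BNode n k}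
    (h : Relation.ReflTransGen (edge1 n k C1) (.u i) v) :
    bidx v = i ∨ (bidx v ∉ C1 ∧ (i ∈ C1 ∨ i < bidx v)) := by
  refine reach_inv (P := fun w : BNode n k => bidx w = i ∨ (bidx w ∉ C1 ∧ (i ∈ C1 ∨ i < bidx w)))
    ?_ h (Or.inl rfl)
  rintro a b ha e
  cases a <;> cases b <;> simp [edge1] at e
  case u.u i₁ i₂ =>
    rcases ha with ha | ha
    · simp only [bidx] at ha ⊢
      subst ha
      rcases e with ⟨h1, h2⟩ | ⟨h1, h2, h3⟩
      · exact Or.inr ⟨h2, Or.inl h1⟩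
      · exact Or.inr ⟨h2, Or.inr h3⟩
    · simp only [bidx] at ha ⊢
      rcases e with ⟨h1, h2⟩ | ⟨h1, h2, h3⟩
      · exact absurd h1 ha.1
      · rcases ha.2 with hc | hc
        · exact Or.inr ⟨h2, Or.inl hc⟩
        · exact Or.inr ⟨h2, Or.inr (lt_trans hc h3)⟩
  case u.y i₁ i₂ =>
    subst e; simpa [bidx] using ha
  case y.x i₁ i₂ j₂ =>
    rw [← e.1]; simpa [bidx] using ha
  case x.x i₁ j₁ i₂ j₂ =>
    rw [← e.1]; simpa [bidx] using ha
  case x.z i₁ j₁ i₂ =>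
    rw [← e.1]; simpa [bidx] using ha

end Net1

section Net2

variable (C2 : Finset (Fin n)) (A : Fin k → Finset (Fin n)) (b : Fin k → Fin n)

lemma r2_y {i : Fin n} {v : BNode n k}
    (h : Relation.ReflTransGen (edge2 n k C2 A b) (.y i) v) : v = .y i := by
  refine reach_inv (P := fun w : BNode n k => w = .y i) ?_ h rfl
  rintro a c rfl e
  cases c <;> simp [edge2] at e

lemma r2_z {i : Fin n} {v : BNode n k}
    (h : Relation.ReflTransGen (edge2 n k C2 A b) (.z i) v) : v = .z i ∨ v = .y i := by
  refine reach_inv (P := fun w : BNode n k => w = .z i ∨ w = .y i) ?_ h (Or.inl rfl)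
  rintro a c (rfl | rfl) e
  · cases c <;> simp [edge2] at e
    case y i' => exact Or.inr (by rw [e])
  · cases c <;> simp [edge2] at e

lemma r2_x {i : Fin n} {j : Fin k} {v : BNode n k}
    (h : Relation.ReflTransGen (edge2 n k C2 A b) (.x i j) v) :
    v = .x i j ∨ ∃ j', v = .x (b j') j' := by
  refine reach_inv (P := fun w : BNode n k => w = .x i j ∨ ∃ j', w = .x (b j') j')
    ?_ h (Or.inl rfl)
  rintro a c ha e
  rcases ha with rfl | ⟨j', rfl⟩ <;> cases c <;> simp [edge2] at e
  · case x i'' j'' => exact Or.inr ⟨j, by rw [e.2.1, e.1]⟩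
  · case x i'' j'' => exact Or.inr ⟨j', by rw [e.2.1, e.1]⟩

lemma r2_u {i : Fin n} {v : BNode n k}
    (h : Relation.ReflTransGen (edge2 n k C2 A b) (.u i) v) :
    bidx v = i ∨ (bidx v ∉ C2 ∧ (i ∈ C2 ∨ i < bidx v)) ∨ ∃ j, v = .x (b j) j := by
  refine reach_inv
    (P := fun w : BNode n k =>
      bidx w = i ∨ (bidx w ∉ C2 ∧ (i ∈ C2 ∨ i < bidx w)) ∨ ∃ j, w = .x (b j) j)
    ?_ h (Or.inl rfl)
  rintro a c ha e
  cases a <;> cases c <;> simp [edge2] at e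
  case u.u i₁ i₂ =>
    rcases ha with ha | ha | ⟨j, hj⟩
    · simp only [bidx] at ha ⊢
      subst ha
      rcases e with ⟨h1, h2⟩ | ⟨h1, h2, h3⟩
      · exact Or.inr (Or.inl ⟨h2, Or.inl h1⟩)
      · exact Or.inr (Or.inl ⟨h2, Or.inr h3⟩)
    · simp only [bidx] at ha ⊢
      rcases e with ⟨h1, h2⟩ | ⟨h1, h2, h3⟩
      · exact absurd h1 ha.1
      · rcases ha.2 with hc | hc
        · exact Or.inr (Or.inl ⟨h2, Or.inl hc⟩)
        · exact Or.inr (Or.inl ⟨h2, Or.inr (lt_trans hc h3)⟩)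
    · exact absurd hj (by simp)
  case u.z i₁ i₂ =>
    subst e
    rcases ha with ha | ha | ⟨j, hj⟩
    · simpa [bidx] using Or.inl ha
    · exact Or.inr (Or.inl (by simpa [bidx] using ha))
    · exact absurd hj (by simp)
  case z.y i₁ i₂ =>
    subst e
    rcases ha with ha | ha | ⟨j, hj⟩
    · simpa [bidx] using Or.inl ha
    · exact Or.inr (Or.inl (by simpa [bidx] using ha))
    · exact absurd hj (by simp)
  case u.x i₁ i₂ j₂ =>
    rw [← e.1]
    rcases ha with ha | ha | ⟨j, hj⟩
    · simpa [bidx] using Or.inl ha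
    · exact Or.inr (Or.inl (by simpa [bidx] using ha))
    · exact absurd hj (by simp)
  case x.x i₁ j₁ i₂ j₂ =>
    exact Or.inr (Or.inr ⟨j₁, by rw [e.2.1, e.1]⟩)

end Net2

end Graphs

section Graphs2

variable {n k : ℕ}

section EdgeIff

variable {C1 C2 : Finset (Fin n)} {A : Fin k → Finset (Fin n)} {b : Fin k → Fin n}

lemma edge1_uu {i1 i2 : Fin n} :
    edge1 n k C1 (.u i1) (.u i2) ↔ ((i1 ∈ C1 ∧ i2 ∉ C1) ∨ (i1 ∉ C1 ∧ i2 ∉ C1 ∧ i1 < i2)) :=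
  Iff.rfl

lemma edge1_uy {i1 i2 : Fin n} : edge1 n k C1 (.u i1) (.y i2) ↔ i1 = i2 := Iff.rfl

lemma edge1_yx {i1 i2 : Fin n} {j : Fin k} :
    edge1 n k C1 (.y i1) (.x i2 j) ↔ (i1 = i2 ∧ (j : ℕ) = 0) := Iff.rfl

lemma edge1_xx {i1 i2 : Fin n} {j1 j2 : Fin k} :
    edge1 n k C1 (.x i1 j1) (.x i2 j2) ↔ (i1 = i2 ∧ (j2 : ℕ) = (j1 : ℕ) + 1) := Iff.rfl

lemma edge1_xz {i1 i2 : Fin n} {j1 : Fin k} :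
    edge1 n k C1 (.x i1 j1) (.z i2) ↔ (i1 = i2 ∧ (j1 : ℕ) = k - 1) := Iff.rfl

lemma edge2_uu {i1 i2 : Fin n} :
    edge2 n k C2 A b (.u i1) (.u i2)
      ↔ ((i1 ∈ C2 ∧ i2 ∉ C2) ∨ (i1 ∉ C2 ∧ i2 ∉ C2 ∧ i1 < i2)) := Iff.rfl

lemma edge2_uz {i1 i2 : Fin n} : edge2 n k C2 A b (.u i1) (.z i2) ↔ i1 = i2 := Iff.rfl

lemma edge2_zy {i1 i2 : Fin n} : edge2 n k C2 A b (.z i1) (.y i2) ↔ i1 = i2 := Iff.rfl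

lemma edge2_ux {i1 i2 : Fin n} {j : Fin k} :
    edge2 n k C2 A b (.u i1) (.x i2 j) ↔ (i1 = i2 ∧ i2 ≠ b j) := Iff.rfl

lemma edge2_xx {i1 i2 : Fin n} {j1 j2 : Fin k} :
    edge2 n k C2 A b (.x i1 j1) (.x i2 j2) ↔ (j1 = j2 ∧ i2 = b j1 ∧ i1 ∈ A j1) := Iff.rfl

end EdgeIff

section Net1paths

variable (C1 : Finset (Fin n))

lemma p1_x (i : Fin n) : ∀ (jv : ℕ) (h : jv < k),
    Relation.ReflTransGen (edge1 n k C1) (.u i) (.x i ⟨jv, h⟩) := by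
  intro jv
  induction jv with
  | zero =>
    intro h
    have e1 : edge1 n k C1 (.u i) (.y i) := edge1_uy.mpr rfl
    have e2 : edge1 n k C1 (.y i) (.x i ⟨0, h⟩) := edge1_yx.mpr ⟨rfl, rfl⟩
    exact (Relation.ReflTransGen.single e1).tail e2
  | succ jv ih =>
    intro h
    refine Relation.ReflTransGen.tail (ih (by omega)) ?_
    exact edge1_xx.mpr ⟨rfl, rfl⟩

lemma p1_chain (hk : 1 ≤ k) (i : Fin n) (v : BNode n k) (hv : bidx v = i)
    (hne : v ≠ .u i) : Relation.ReflTransGen (edge1 n k C1) (.u i) v := by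
  cases v with
  | u i' => exact absurd (by rw [← hv]; rfl) hne
  | y i' =>
    have h : i' = i := hv
    subst h
    exact Relation.ReflTransGen.single (edge1_uy.mpr rfl)
  | x i' j =>
    have h : i' = i := hv
    subst h
    have := p1_x C1 i' (j : ℕ) j.isLt
    simpa using this
  | z i' =>
    have h : i' = i := hv
    subst h
    refine Relation.ReflTransGen.tail (p1_x C1 i' (k - 1) (by omega)) ?_
    exact edge1_xz.mpr ⟨rfl, rfl⟩

lemma e1_uu' {C1 : Finset (Fin n)} {m i : Fin n} (hi : i ∉ C1) (h : m ∈ C1 ∨ m < i) :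
    edge1 n k C1 (.u m) (.u i) := by
  rcases h with h | h
  · exact Or.inl ⟨h, hi⟩
  · by_cases hm : m ∈ C1
    · exact Or.inl ⟨hm, hi⟩
    · exact Or.inr ⟨hm, hi, h⟩

end Net1paths

section Net1nds

variable (C1 : Finset (Fin n))

lemma pa1_y_iff (i : Fin n) (v : BNode n k) : edge1 n k C1 v (.y i) ↔ v = .u i := by
  cases v with
  | u i' =>
    rw [edge1_uy]
    constructor
    · intro h; rw [h]
    · intro h; injection h
  | y i' => exact iff_of_false (fun h => h) (by simp)
  | z i' => exact iff_of_false (fun h => h) (by simp)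
  | x i' j => exact iff_of_false (fun h => h) (by simp)

lemma pa1_cnode_iff (hk : 1 ≤ k) (i : Fin n) {m' : ℕ} (h1 : 1 ≤ m') (h2 : m' ≤ k + 1)
    (v : BNode n k) : edge1 n k C1 v (cnode i m') ↔ v = cnode i (m' - 1) := by
  rcases le_or_gt m' k with hmk | hmk
  · rw [cnode_x i h1 hmk]
    rcases Nat.lt_or_ge m' 2 with hm2 | hm2
    · have hm1 : m' = 1 := by omega
      subst hm1
      have hcz : cnode (k := k) i (1 - 1) = .y i := by
        rw [show (1 : ℕ) - 1 = 0 from rfl, cnode_zero]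
      rw [hcz]
      cases v with
      | u i' => exact iff_of_false (fun h => h) (by simp)
      | y i' =>
        rw [edge1_yx]
        constructor
        · rintro ⟨rfl, -⟩; rfl
        · intro h; injection h with h; exact ⟨h, rfl⟩
      | z i' => exact iff_of_false (fun h => h) (by simp)
      | x i' j' =>
        rw [edge1_xx]
        refine iff_of_false ?_ (by simp)
        rintro ⟨-, hj⟩
        simp at hj
    · have e1 : cnode (k := k) i (m' - 1) = BNode.x i ⟨m' - 2, by omega⟩ := by
        rw [cnode_x i (by omega) (by omega)]
        have hq : m' - 1 - 1 = m' - 2 := by omega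
        simp [hq]
      rw [e1]
      cases v with
      | u i' => exact iff_of_false (fun h => h) (by simp)
      | y i' =>
        rw [edge1_yx]
        refine iff_of_false ?_ (by simp)
        rintro ⟨-, hj⟩
        simp at hj
        omega
      | z i' => exact iff_of_false (fun h => h) (by simp)
      | x i' j' =>
        rw [edge1_xx]
        constructor
        · rintro ⟨rfl, hj⟩
          simp at hj
          have : j' = (⟨m' - 2, by omega⟩ : Fin k) := by
            apply Fin.ext; simp; omega
          rw [this]
        · intro h
          injection h with h3 h4
          subst h3
          refine ⟨rfl, ?_⟩
          rw [h4]
          simp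
          omega
  · have hm' : m' = k + 1 := by omega
    subst hm'
    have hcz : cnode (k := k) i (k + 1) = .z i := cnode_z i (le_refl _) hk
    have hcx : cnode (k := k) i (k + 1 - 1) = .x i ⟨k - 1, by omega⟩ := by
      rw [show k + 1 - 1 = k from rfl, cnode_x i hk (le_refl _)]
    rw [hcz, hcx]
    cases v with
    | u i' => exact iff_of_false (fun h => h) (by simp)
    | y i' => exact iff_of_false (fun h => h) (by simp)
    | z i' => exact iff_of_false (fun h => h) (by simp)
    | x i' j' =>
      rw [edge1_xz]
      constructor
      · rintro ⟨rfl, hj⟩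
        have : j' = (⟨k - 1, by omega⟩ : Fin k) := by apply Fin.ext; simp [hj]
        rw [this]
      · intro h
        injection h with h3 h4
        subst h3
        refine ⟨rfl, ?_⟩
        rw [h4]

lemma pa1_u_mem_iff {C1 : Finset (Fin n)} {i : Fin n} (hi : i ∈ C1) (v : BNode n k) :
    ¬ edge1 n k C1 v (.u i) := by
  cases v with
  | u i' =>
    rw [edge1_uu]
    rintro (⟨-, h⟩ | ⟨-, h, -⟩) <;> exact h hi
  | y i' => exact fun h => h
  | z i' => exact fun h => h
  | x i' j => exact fun h => h

lemma nds1_y {i : Fin n} {v : BNode n k} (hv : bidx v ≠ i) :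
    v ∈ nonDescSet (edge1 n k C1) (.y i) := by
  constructor
  · intro h
    rcases r1_y C1 h with rfl | ⟨j, rfl⟩ | rfl <;> exact hv rfl
  · intro h
    rw [pa1_y_iff] at h
    subst h
    exact hv rfl

lemma nds1_cnode (hk : 1 ≤ k) {i : Fin n} {m' : ℕ} (h1 : 1 ≤ m') (h2 : m' ≤ k + 1)
    {v : BNode n k}
    (hv : bidx v ≠ i ∨ v = .u i ∨ ∃ m'', v = cnode i m'' ∧ m'' + 1 < m') :
    v ∈ nonDescSet (edge1 n k C1) (cnode i m') := by
  have hxcase : ∀ (j' : Fin k), v = BNode.x i j' → (m' - 1 : ℕ) ≤ (j' : ℕ) → False := by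
    rintro j' rfl hj'
    rcases hv with hv | hv | ⟨m'', hm'', hlt⟩
    · exact hv rfl
    · simp at hv
    · have hb : m'' ≤ k + 1 := by omega
      have hc : cidx (BNode.x i j' : BNode n k) = m'' := by rw [hm'', cidx_cnode i hb]
      simp only [cidx] at hc
      omega
  have hzcase : v = BNode.z i → False := by
    rintro rfl
    rcases hv with hv | hv | ⟨m'', hm'', hlt⟩
    · exact hv rfl
    · simp at hv
    · have hb : m'' ≤ k + 1 := by
        by_contra hc
        push_neg at hc
        rw [cnode_z i (show k + 1 ≤ m'' by omega) hk] at hm''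
        omega
      have hc : cidx (BNode.z i : BNode n k) = m'' := by rw [hm'', cidx_cnode i hb]
      simp only [cidx] at hc
      omega
  constructor
  · intro h
    rcases le_or_gt m' k with hmk | hmk
    · rw [cnode_x i h1 hmk] at h
      rcases r1_x C1 h with ⟨j', rfl, hj'⟩ | rfl
      · exact hxcase j' rfl (by simpa using hj')
      · exact hzcase rfl
    · have hm' : m' = k + 1 := by omega
      subst hm'
      rw [cnode_z i (le_refl _) hk] at h
      exact hzcase (r1_z C1 h)
  · intro h
    rw [pa1_cnode_iff C1 hk i h1 h2] at h
    rcases hv with hv | hv | ⟨m'', hm'', hlt⟩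
    · rw [h] at hv
      exact hv (bidx_cnode i (m' - 1))
    · rw [hv] at h
      have hcx : cidx (BNode.u i : BNode n k) = m' - 1 := by rw [h, cidx_cnode i (by omega)]
      simp only [cidx] at hcx
      rw [show m' - 1 = 0 by omega, cnode_zero] at h
      simp at h
    · rw [hm''] at h
      have := cnode_inj i (show m'' ≤ k + 1 by omega) (by omega) h
      omega

lemma nds1_u_mem {C1 : Finset (Fin n)} {i : Fin n} (hi : i ∈ C1) {v : BNode n k}
    (hm : bidx v ∈ C1) (hne : bidx v ≠ i) : v ∈ nonDescSet (edge1 n k C1) (.u i) := by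
  constructor
  · intro h
    rcases r1_u C1 h with h | ⟨h, -⟩
    · exact hne h
    · exact h hm
  · exact pa1_u_mem_iff hi v

lemma ndsub1_u_mem {C1 : Finset (Fin n)} {i : Fin n} (hk : 1 ≤ k) (hi : i ∈ C1)
    {v : BNode n k} (hv : v ∈ nonDescSet (edge1 n k C1) (.u i)) :
    bidx v ∈ C1 ∧ bidx v ≠ i := by
  obtain ⟨hnr, hnp⟩ := hv
  by_cases hbi : bidx v = i
  · exfalso
    by_cases hu : v = .u i
    · exact hnr (hu ▸ Relation.ReflTransGen.refl)
    · exact hnr (p1_chain C1 hk i v hbi hu)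
  · refine ⟨?_, hbi⟩
    by_contra hc
    have h1 : Relation.ReflTransGen (edge1 n k C1) (.u i) (.u (bidx v)) :=
      Relation.ReflTransGen.single (Or.inl ⟨hi, hc⟩)
    by_cases hu : v = .u (bidx v)
    · exact hnr (hu ▸ h1)
    · exact hnr (h1.trans (p1_chain C1 hk (bidx v) v rfl hu))

lemma ndsub1_u_not {C1 : Finset (Fin n)} {i : Fin n} (hk : 1 ≤ k) (hi : i ∉ C1)
    {v : BNode n k} (hv : v ∈ nonDescSet (edge1 n k C1) (.u i)) :
    edge1 n k C1 (.u (bidx v)) (.u i) := by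
  obtain ⟨hnr, hnp⟩ := hv
  apply e1_uu' hi
  by_contra hc
  push_neg at hc
  obtain ⟨hc1, hc2⟩ := hc
  by_cases hbi : bidx v = i
  · exfalso
    by_cases hu : v = .u i
    · exact hnr (hu ▸ Relation.ReflTransGen.refl)
    · exact hnr (p1_chain C1 hk i v hbi hu)
  · exfalso
    have hlt : i < bidx v := lt_of_le_of_ne hc2 (Ne.symm hbi)
    have h1 : Relation.ReflTransGen (edge1 n k C1) (.u i) (.u (bidx v)) :=
      Relation.ReflTransGen.single (Or.inr ⟨hi, hc1, hlt⟩)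
    by_cases hu : v = .u (bidx v)
    · exact hnr (hu ▸ h1)
    · exact hnr (h1.trans (p1_chain C1 hk (bidx v) v rfl hu))

end Net1nds

end Graphs2

section Graphs3

variable {n k : ℕ}

/-- A node of the form `X_{b_j}^j`. -/
def bform (b : Fin k → Fin n) (v : BNode n k) : Prop := ∃ j, v = BNode.x (b j) j

lemma bform_x_iff {b : Fin k → Fin n} {m : Fin n} {j : Fin k} :
    bform b (.x m j : BNode n k) ↔ m = b j := by
  constructor
  · rintro ⟨j', hj'⟩
    injection hj' with h1 h2
    subst h2; exact h1
  · rintro rfl; exact ⟨j, rfl⟩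

section Net2

variable (C2 : Finset (Fin n)) (A : Fin k → Finset (Fin n)) (b : Fin k → Fin n)

lemma p2_chain (m : Fin n) (v : BNode n k) (hv : bidx v = m) (hne : v ≠ .u m)
    (hnb : ¬ bform b v) : Relation.ReflTransGen (edge2 n k C2 A b) (.u m) v := by
  cases v with
  | u i' => exact absurd (by rw [← hv]; rfl) hne
  | z i' =>
    have h : i' = m := hv
    subst h
    exact Relation.ReflTransGen.single (edge2_uz.mpr rfl)
  | y i' =>
    have h : i' = m := hv
    subst h
    exact (Relation.ReflTransGen.single (edge2_uz.mpr rfl)).tail (edge2_zy.mpr rfl)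
  | x i' j =>
    have h : i' = m := hv
    subst h
    refine Relation.ReflTransGen.single (edge2_ux.mpr ⟨rfl, ?_⟩)
    intro hc
    exact hnb (bform_x_iff.mpr hc)

lemma e2_uu' {i m : Fin n} (hi : i ∉ C2) (h : m ∈ C2 ∨ m < i) :
    edge2 n k C2 A b (.u m) (.u i) := by
  rcases h with h | h
  · exact Or.inl ⟨h, hi⟩
  · by_cases hm : m ∈ C2
    · exact Or.inl ⟨hm, hi⟩
    · exact Or.inr ⟨hm, hi, h⟩

lemma pa2_y_iff (i : Fin n) (v : BNode n k) : edge2 n k C2 A b v (.y i) ↔ v = .z i := by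
  cases v with
  | z i' =>
    rw [edge2_zy]
    constructor
    · intro h; rw [h]
    · intro h; injection h
  | u i' => exact iff_of_false (fun h => h) (by simp)
  | y i' => exact iff_of_false (fun h => h) (by simp)
  | x i' j => exact iff_of_false (fun h => h) (by simp)

lemma pa2_z_iff (i : Fin n) (v : BNode n k) : edge2 n k C2 A b v (.z i) ↔ v = .u i := by
  cases v with
  | u i' =>
    rw [edge2_uz]
    constructor
    · intro h; rw [h]
    · intro h; injection h
  | z i' => exact iff_of_false (fun h => h) (by simp)
  | y i' => exact iff_of_false (fun h => h) (by simp)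
  | x i' j => exact iff_of_false (fun h => h) (by simp)

lemma pa2_xb_iff (j : Fin k) (v : BNode n k) :
    edge2 n k C2 A b v (.x (b j) j) ↔ ∃ a, a ∈ A j ∧ v = .x a j := by
  cases v with
  | u i' =>
    rw [edge2_ux]
    refine iff_of_false ?_ (by simp)
    rintro ⟨-, h⟩
    exact h rfl
  | z i' => exact iff_of_false (fun h => h) (by simp)
  | y i' => exact iff_of_false (fun h => h) (by simp)
  | x i' j' =>
    rw [edge2_xx]
    constructor
    · rintro ⟨rfl, -, ha⟩
      exact ⟨i', ha, rfl⟩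
    · rintro ⟨a, ha, heq⟩
      injection heq with h1 h2
      subst h1; subst h2
      exact ⟨rfl, rfl, ha⟩

lemma pa2_u_mem_iff {i : Fin n} (hi : i ∈ C2) (v : BNode n k) :
    ¬ edge2 n k C2 A b v (.u i) := by
  cases v with
  | u i' =>
    rw [edge2_uu]
    rintro (⟨-, h⟩ | ⟨-, h, -⟩) <;> exact h hi
  | y i' => exact fun h => h
  | z i' => exact fun h => h
  | x i' j => exact fun h => h

lemma nds2_y {i : Fin n} {v : BNode n k} (h1 : v ≠ .y i) (h2 : v ≠ .z i) :
    v ∈ nonDescSet (edge2 n k C2 A b) (.y i) := by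
  constructor
  · intro h
    exact h1 (r2_y C2 A b h)
  · intro h
    exact h2 ((pa2_y_iff C2 A b i v).mp h)

lemma nds2_z {i : Fin n} {v : BNode n k} (h1 : v ≠ .z i) (h2 : v ≠ .y i) (h3 : v ≠ .u i) :
    v ∈ nonDescSet (edge2 n k C2 A b) (.z i) := by
  constructor
  · intro h
    rcases r2_z C2 A b h with h | h
    · exact h1 h
    · exact h2 h
  · intro h
    exact h3 ((pa2_z_iff C2 A b i v).mp h)

lemma nds2_xb {j : Fin k} {v : BNode n k} (hx : ∀ (i' : Fin n) (j' : Fin k), v ≠ .x i' j') :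
    v ∈ nonDescSet (edge2 n k C2 A b) (.x (b j) j) := by
  constructor
  · intro h
    rcases r2_x C2 A b h with h | ⟨j', h⟩
    · exact hx _ _ h
    · exact hx _ _ h
  · intro h
    obtain ⟨a, -, h⟩ := (pa2_xb_iff C2 A b j v).mp h
    exact hx _ _ h

lemma nds2_u_mem {i : Fin n} (hi : i ∈ C2) {v : BNode n k}
    (hm : bidx v ∈ C2) (hne : bidx v ≠ i)
    (hx : ∀ (i' : Fin n) (j' : Fin k), v ≠ .x i' j') :
    v ∈ nonDescSet (edge2 n k C2 A b) (.u i) := by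
  constructor
  · intro h
    rcases r2_u C2 A b h with h | ⟨h, -⟩ | ⟨j, h⟩
    · exact hne h
    · exact h hm
    · exact hx _ _ h
  · exact pa2_u_mem_iff C2 A b hi v

lemma ndsub2_u_not {i : Fin n} (hi : i ∉ C2) (hbA : ∀ j, b j ∉ A j) {v : BNode n k}
    (hv : v ∈ nonDescSet (edge2 n k C2 A b) (.u i)) :
    (¬ bform b v → edge2 n k C2 A b (.u (bidx v)) (.u i)) ∧
      (∀ j, v = .x (b j) j → ∀ a ∈ A j, edge2 n k C2 A b (.u a) (.u i)) := by
  obtain ⟨hnr, hnp⟩ := hv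
  have reachm : ∀ m : Fin n, m ∉ C2 → i < m ∨ m = i →
      Relation.ReflTransGen (edge2 n k C2 A b) (.u i) (.u m) := by
    intro m hm him
    rcases him with him | rfl
    · exact Relation.ReflTransGen.single (Or.inr ⟨hi, hm, him⟩)
    · exact Relation.ReflTransGen.refl
  constructor
  · intro hnb
    apply e2_uu' C2 A b hi
    by_contra hc
    push_neg at hc
    obtain ⟨hc1, hc2⟩ := hc
    have h1 : Relation.ReflTransGen (edge2 n k C2 A b) (.u i) (.u (bidx v)) := by
      apply reachm _ hc1
      rcases eq_or_lt_of_le hc2 with h | h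
      · exact Or.inr h.symm
      · exact Or.inl h
    by_cases hu : v = .u (bidx v)
    · exact hnr (hu ▸ h1)
    · exact hnr (h1.trans (p2_chain C2 A b (bidx v) v rfl hu hnb))
  · rintro j rfl a ha
    apply e2_uu' C2 A b hi
    by_contra hc
    push_neg at hc
    obtain ⟨hc1, hc2⟩ := hc
    have hra : Relation.ReflTransGen (edge2 n k C2 A b) (.u i) (.x a j) := by
      have h1 : Relation.ReflTransGen (edge2 n k C2 A b) (.u i) (.u a) := by
        apply reachm _ hc1
        rcases eq_or_lt_of_le hc2 with h | h
        · exact Or.inr h.symm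
        · exact Or.inl h
      refine h1.tail (edge2_ux.mpr ⟨rfl, ?_⟩)
      intro hab
      exact hbA j (hab ▸ ha)
    exact hnr (hra.tail (edge2_xx.mpr ⟨rfl, rfl, ha⟩))

lemma ndsub2_u_mem {i : Fin n} (hi : i ∈ C2) (hbA : ∀ j, b j ∉ A j) {v : BNode n k}
    (hv : v ∈ nonDescSet (edge2 n k C2 A b) (.u i)) :
    (¬ bform b v → bidx v ∈ C2 ∧ bidx v ≠ i) ∧
      (∀ j, v = .x (b j) j → ∀ a ∈ A j,
        a ∈ C2 ∧ a ≠ i ∧ BNode.x a j ∈ nonDescSet (edge2 n k C2 A b) (.u i)) := by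
  obtain ⟨hnr, hnp⟩ := hv
  have reachm : ∀ m : Fin n, m ∉ C2 ∨ m = i →
      Relation.ReflTransGen (edge2 n k C2 A b) (.u i) (.u m) := by
    intro m him
    rcases him with hm | rfl
    · exact Relation.ReflTransGen.single (Or.inl ⟨hi, hm⟩)
    · exact Relation.ReflTransGen.refl
  constructor
  · intro hnb
    constructor
    · by_contra hc
      have h1 := reachm (bidx v) (Or.inl hc)
      by_cases hu : v = .u (bidx v)
      · exact hnr (hu ▸ h1)
      · exact hnr (h1.trans (p2_chain C2 A b (bidx v) v rfl hu hnb))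
    · intro hc
      have h1 := reachm (bidx v) (Or.inr hc)
      by_cases hu : v = .u (bidx v)
      · exact hnr (hu ▸ h1)
      · exact hnr (h1.trans (p2_chain C2 A b (bidx v) v rfl hu hnb))
  · rintro j rfl a ha
    have hab : a ≠ b j := fun hc => hbA j (hc ▸ ha)
    have hxa : ∀ haC : a ∉ C2 ∨ a = i, False := by
      intro haC
      have h1 := (reachm a haC).tail (edge2_ux.mpr ⟨rfl, hab⟩)
      exact hnr (h1.tail (edge2_xx.mpr ⟨rfl, rfl, ha⟩))
    have haC2 : a ∈ C2 := by
      by_contra hc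
      exact hxa (Or.inl hc)
    have hai : a ≠ i := by
      intro hc
      exact hxa (Or.inr hc)
    refine ⟨haC2, hai, ?_, ?_⟩
    · intro h
      rcases r2_u C2 A b h with h | ⟨h, -⟩ | ⟨j', h⟩
      · exact hai h
      · exact h haC2
      · injection h with h1 h2
        subst h2
        exact hab h1
    · exact pa2_u_mem_iff C2 A b hi _

end Net2

end Graphs3

section Sound1

open Classical

variable {Ω α β γ : Type} {μ : PMF Ω}

lemma ci_const_right {X' : Ω → α} {Y : Ω → β} {Z : Ω → γ}
    (hY : ∀ ω ω', Y ω = Y ω') : CondIndep μ X' Y Z := by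
  obtain ⟨ω₀, -⟩ := μ.support_nonempty
  intro x y z
  by_cases hy : y = Y ω₀
  · subst hy
    have e1 : {ω | X' ω = x ∧ Y ω = Y ω₀ ∧ Z ω = z} = {ω | X' ω = x ∧ Z ω = z} := by
      ext ω; simp only [Set.mem_setOf_eq]
      exact ⟨fun h => ⟨h.1, h.2.2⟩, fun h => ⟨h.1, hY ω ω₀, h.2⟩⟩
    have e2 : {ω | Y ω = Y ω₀ ∧ Z ω = z} = {ω | Z ω = z} := by
      ext ω; simp only [Set.mem_setOf_eq]
      exact ⟨fun h => h.2, fun h => ⟨hY ω ω₀, h⟩⟩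
    rw [e1, e2, mul_comm]
  · have e1 : {ω | X' ω = x ∧ Y ω = y ∧ Z ω = z} = (∅ : Set Ω) := by
      ext ω; simp only [Set.mem_setOf_eq, Set.mem_empty_iff_false, iff_false]
      rintro ⟨-, h, -⟩; exact hy (h ▸ hY ω ω₀)
    have e2 : {ω | Y ω = y ∧ Z ω = z} = (∅ : Set Ω) := by
      ext ω; simp only [Set.mem_setOf_eq, Set.mem_empty_iff_false, iff_false]
      rintro ⟨h, -⟩; exact hy (h ▸ hY ω ω₀)
    rw [e1, e2, pr_empty, zero_mul, mul_zero]

variable {n k : ℕ}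

lemma jnt_empty_const (X : BNode n k → Ω → ℕ) (ω ω' : Ω) :
    Jnt X ∅ ω = Jnt X ∅ ω' := by
  funext v; simp [Jnt]

/-- The set of all `U` nodes. -/
noncomputable def SU (n k : ℕ) : Finset (BNode n k) := Finset.univ.image BNode.u

lemma mem_SU {v : BNode n k} : v ∈ SU n k ↔ ∃ i, v = BNode.u i := by
  constructor
  · intro h
    obtain ⟨i, -, rfl⟩ := Finset.mem_image.mp h
    exact ⟨i, rfl⟩
  · rintro ⟨i, rfl⟩
    exact Finset.mem_image.mpr ⟨i, Finset.mem_univ i, rfl⟩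

/-- Chain interval nodes at positions `t+1, …, m`. -/
noncomputable def cint (i : Fin n) (t m : ℕ) : Finset (BNode n k) :=
  (Finset.Ioc t m).image (cnode i)

lemma cint_self (i : Fin n) (t : ℕ) : (cint i t t : Finset (BNode n k)) = ∅ := by
  simp [cint]

lemma cint_succ (i : Fin n) {t m : ℕ} (h : t ≤ m) :
    (cint i t (m + 1) : Finset (BNode n k)) = insert (cnode i (m + 1)) (cint i t m) := by
  have : Finset.Ioc t (m + 1) = insert (m + 1) (Finset.Ioc t m) := by
    ext x; simp only [Finset.mem_Ioc, Finset.mem_insert]; omega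
  rw [cint, this, Finset.image_insert]
  rfl

lemma mem_cint {i : Fin n} {t m : ℕ} {v : BNode n k} :
    v ∈ (cint i t m : Finset (BNode n k)) ↔ ∃ m'', t < m'' ∧ m'' ≤ m ∧ v = cnode i m'' := by
  simp only [cint, Finset.mem_image, Finset.mem_Ioc]
  constructor
  · rintro ⟨m'', ⟨h1, h2⟩, rfl⟩; exact ⟨m'', h1, h2, rfl⟩
  · rintro ⟨m'', h1, h2, rfl⟩; exact ⟨m'', ⟨h1, h2⟩, rfl⟩

section Engine

variable (C1 : Finset (Fin n)) {X : BNode n k → Ω → ℕ}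

/-- The chain-induction engine for network 1. -/
lemma net1_chain_engine (hk : 1 ≤ k) (hBN1 : SatisfiesBN μ X (edge1 n k C1))
    {S₀ Bc : Finset (BNode n k)} {i : Fin n} {t : ℕ}
    (hS₀ : ∀ v ∈ S₀, ∀ m', t < m' → m' ≤ k + 1 → v ∈ nonDescSet (edge1 n k C1) (cnode i m'))
    (hBc : ∀ v ∈ Bc, ∀ m', t + 1 < m' → m' ≤ k + 1 → v ∈ nonDescSet (edge1 n k C1) (cnode i m'))
    (hBc1 : ∀ v ∈ Bc, v ≠ cnode i t → t + 1 ≤ k + 1 →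
      v ∈ nonDescSet (edge1 n k C1) (cnode i (t + 1)))
    (hct : (cnode i t : BNode n k) ∈ Bc) :
    ∀ m, t ≤ m → m ≤ k + 1 → CondIndep μ (Jnt X S₀) (Jnt X (cint i t m)) (Jnt X Bc) := by
  intro m htm
  induction m, htm using Nat.le_induction with
  | base =>
    intro _
    rw [cint_self]
    exact ci_const_right (jnt_empty_const X)
  | succ m htm ih =>
    intro hm1
    have hm0 : m ≤ k + 1 := by omega
    have ihm := ih (by omega)
    set Dm : Finset (BNode n k) := Bc ∪ cint i t m with hDm
    have hSx : ∀ v ∈ S₀ ∪ Dm.erase (cnode i m),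
        v ∈ nonDescSet (edge1 n k C1) (cnode i (m + 1)) := by
      intro v hv
      rcases Finset.mem_union.mp hv with hv | hv
      · exact hS₀ v hv (m + 1) (by omega) hm1
      · obtain ⟨hne, hvD⟩ := Finset.mem_erase.mp hv
        rcases Finset.mem_union.mp hvD with hv' | hv'
        · rcases Nat.eq_or_lt_of_le htm with rfl | hlt
          · exact hBc1 v hv' hne hm1
          · exact hBc v hv' (m + 1) (by omega) hm1
        · obtain ⟨m'', hm''1, hm''2, rfl⟩ := mem_cint.mp hv'
          have hmne : m'' ≠ m := fun hc => hne (by rw [hc])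
          exact nds1_cnode C1 hk (by omega) hm1
            (Or.inr (Or.inr ⟨m'', rfl, by omega⟩))
    have hT : ∀ v, v ∈ ({cnode i m} : Finset (BNode n k))
        ↔ v ∈ parentSet (edge1 n k C1) (cnode i (m + 1)) := by
      intro v
      rw [Finset.mem_singleton]
      have : v ∈ parentSet (edge1 n k C1) (cnode i (m + 1))
          ↔ edge1 n k C1 v (cnode i (m + 1)) := Iff.rfl
      rw [this, pa1_cnode_iff C1 hk i (by omega) hm1]
      simp
    have hext := bn_extract hBN1 (cnode i (m + 1)) hSx hT
    have hwu := jci_weak_union hext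
    have hset : ({cnode i m} : Finset (BNode n k)) ∪ Dm.erase (cnode i m) = Dm := by
      rw [← Finset.insert_eq, Finset.insert_erase]
      rcases Nat.eq_or_lt_of_le htm with rfl | hlt
      · exact Finset.mem_union.mpr (Or.inl hct)
      · exact Finset.mem_union.mpr (Or.inr (mem_cint.mpr ⟨m, hlt, le_refl _, rfl⟩))
    rw [hset] at hwu
    have hsym := ci_single_jnt_right (condIndep_symm hwu)
    rw [hDm, Finset.union_comm] at hsym
    have hctr := jci_contraction ihm hsym
    have hfin : cint i t m ∪ {cnode i (m + 1)} = (cint i t (m + 1) : Finset (BNode n k)) := by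
      rw [cint_succ i htm, Finset.union_comm, ← Finset.insert_eq]
    rw [hfin] at hctr
    exact hctr

end Engine

end Sound1

section Sound2

open Classical

variable {Ω : Type} {μ : PMF Ω} {n k : ℕ}
variable {C1 C2 : Finset (Fin n)} {A : Fin k → Finset (Fin n)} {b : Fin k → Fin n}
variable {X : BNode n k → Ω → ℕ}

lemma cnode_coe_succ (i : Fin n) (j : Fin k) : (cnode i ((j : ℕ) + 1) : BNode n k) = .x i j := by
  rw [cnode_x i (by omega) (by omega)]
  congr 1

/-- `U ⊥⊥ X_i^j | Y_i` (from network 1). -/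
lemma ci_U_X_Y (hk : 1 ≤ k) (hBN1 : SatisfiesBN μ X (edge1 n k C1)) (i : Fin n) (j : Fin k) :
    CondIndep μ (Jnt X (SU n k)) (X (.x i j)) (X (.y i)) := by
  have heng := net1_chain_engine C1 hk hBN1 (S₀ := SU n k) (Bc := {cnode i 0}) (i := i) (t := 0)
    (fun v hv m' h1 h2 => by
      obtain ⟨i', rfl⟩ := mem_SU.mp hv
      by_cases hii : i' = i
      · subst hii; exact nds1_cnode C1 hk (by omega) h2 (Or.inr (Or.inl rfl))
      · exact nds1_cnode C1 hk (by omega) h2 (Or.inl (by simpa [bidx] using hii)))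
    (fun v hv m' h1 h2 => by
      rw [Finset.mem_singleton] at hv
      exact nds1_cnode C1 hk (by omega) h2 (Or.inr (Or.inr ⟨0, hv, by omega⟩)))
    (fun v hv hne _ => absurd (Finset.mem_singleton.mp hv) hne)
    (Finset.mem_singleton_self _) ((j : ℕ) + 1) (by omega) (by omega)
  have hdec := jci_decomp heng
    (Finset.singleton_subset_iff.mpr (mem_cint.mpr ⟨(j : ℕ) + 1, by omega, le_refl _, rfl⟩))
  rw [cnode_coe_succ] at hdec
  have h1 := ci_jnt_single_right hdec
  have h2 := ci_jnt_single_cond h1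
  rw [cnode_zero] at h2
  exact h2

/-- `U ⊥⊥ Z_i | X_i^j` (from network 1). -/
lemma ci_U_Z_X (hk : 1 ≤ k) (hBN1 : SatisfiesBN μ X (edge1 n k C1)) (i : Fin n) (j : Fin k) :
    CondIndep μ (Jnt X (SU n k)) (X (.z i)) (X (.x i j)) := by
  have heng := net1_chain_engine C1 hk hBN1 (S₀ := SU n k)
    (Bc := {cnode i ((j : ℕ) + 1)}) (i := i) (t := (j : ℕ) + 1)
    (fun v hv m' h1 h2 => by
      obtain ⟨i', rfl⟩ := mem_SU.mp hv
      by_cases hii : i' = i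
      · subst hii; exact nds1_cnode C1 hk (by omega) h2 (Or.inr (Or.inl rfl))
      · exact nds1_cnode C1 hk (by omega) h2 (Or.inl (by simpa [bidx] using hii)))
    (fun v hv m' h1 h2 => by
      rw [Finset.mem_singleton] at hv
      exact nds1_cnode C1 hk (by omega) h2 (Or.inr (Or.inr ⟨(j : ℕ) + 1, hv, by omega⟩)))
    (fun v hv hne _ => absurd (Finset.mem_singleton.mp hv) hne)
    (Finset.mem_singleton_self _) (k + 1) (by omega) (by omega)
  have hdec := jci_decomp heng
    (Finset.singleton_subset_iff.mpr (mem_cint.mpr ⟨k + 1, by omega, le_refl _, rfl⟩))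
  rw [cnode_z i (le_refl _) hk, cnode_coe_succ] at hdec
  have h1 := ci_jnt_single_right hdec
  exact ci_jnt_single_cond h1

/-- `Y_i ⊥⊥ U | (Z_i, X_i^j)` (from network 2). -/
lemma ci_Y_U_ZX (hBN2 : SatisfiesBN μ X (edge2 n k C2 A b)) (i : Fin n) (j : Fin k) :
    CondIndep μ (X (.y i)) (Jnt X (SU n k))
      (Jnt X ({BNode.z i} ∪ {BNode.x i j})) := by
  have hext := bn_extract hBN2 (.y i) (S := SU n k ∪ {BNode.x i j}) (T := {BNode.z i})
    (fun v hv => by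
      rcases Finset.mem_union.mp hv with hv | hv
      · obtain ⟨i', rfl⟩ := mem_SU.mp hv
        exact nds2_y C2 A b (by simp) (by simp)
      · rw [Finset.mem_singleton] at hv
        subst hv
        exact nds2_y C2 A b (by simp) (by simp))
    (fun v => by
      rw [Finset.mem_singleton]
      exact (pa2_y_iff C2 A b i v).symm)
  exact jci_weak_union hext

/-- `U ⊥⊥ Y_i | X_i^j` (combination of the two networks). -/
lemma ci_U_Y_X (hk : 1 ≤ k) (hBN1 : SatisfiesBN μ X (edge1 n k C1))
    (hBN2 : SatisfiesBN μ X (edge2 n k C2 A b)) (i : Fin n) (j : Fin k) :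
    CondIndep μ (Jnt X (SU n k)) (X (.y i)) (X (.x i j)) := by
  have h1 : CondIndep μ (Jnt X (SU n k)) (Jnt X {BNode.z i}) (Jnt X {BNode.x i j}) :=
    ci_single_jnt_cond (ci_single_jnt_right (ci_U_Z_X hk hBN1 i j))
  have h2 : CondIndep μ (Jnt X (SU n k)) (Jnt X {BNode.y i})
      (Jnt X ({BNode.z i} ∪ {BNode.x i j})) :=
    ci_single_jnt_right (condIndep_symm (ci_Y_U_ZX hBN2 i j))
  have h3 := jci_contraction h1 h2
  have h4 := jci_decomp h3
    (Finset.singleton_subset_iff.mpr (Finset.mem_union_right _ (Finset.mem_singleton_self _)))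
  exact ci_jnt_single_cond (ci_jnt_single_right h4)

/-- Anything with indices different from `i` is conditionally independent of the whole
tuple of `i` given `U` (from network 1). -/
lemma ci_tuple (hk : 1 ≤ k) (hBN1 : SatisfiesBN μ X (edge1 n k C1)) (i : Fin n)
    {S₀ : Finset (BNode n k)} (hS₀ : ∀ v ∈ S₀, bidx v ≠ i) {m : ℕ} (hm : m ≤ k + 1) :
    CondIndep μ (Jnt X S₀) (Jnt X ({cnode i 0} ∪ cint i 0 m)) (Jnt X (SU n k)) := by
  have hext := bn_extract hBN1 (.y i) (S := S₀ ∪ (SU n k).erase (BNode.u i))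
      (T := {BNode.u i})
    (fun v hv => by
      rcases Finset.mem_union.mp hv with hv | hv
      · exact nds1_y C1 (hS₀ v hv)
      · obtain ⟨hne, hv⟩ := Finset.mem_erase.mp hv
        obtain ⟨i', rfl⟩ := mem_SU.mp hv
        have : i' ≠ i := fun hc => hne (by rw [hc])
        exact nds1_y C1 (by simpa [bidx] using this))
    (fun v => by
      rw [Finset.mem_singleton]
      exact (pa1_y_iff C1 i v).symm)
  have hwu := jci_weak_union hext
  have hset : ({BNode.u i} : Finset (BNode n k)) ∪ (SU n k).erase (BNode.u i) = SU n k := by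
    rw [← Finset.insert_eq, Finset.insert_erase (mem_SU.mpr ⟨i, rfl⟩)]
  rw [hset] at hwu
  have T0 : CondIndep μ (Jnt X S₀) (Jnt X {cnode i 0}) (Jnt X (SU n k)) := by
    have := ci_single_jnt_right (condIndep_symm hwu)
    rw [cnode_zero]
    exact this
  have heng := net1_chain_engine C1 hk hBN1 (S₀ := S₀)
    (Bc := SU n k ∪ {cnode i 0}) (i := i) (t := 0)
    (fun v hv m' h1 h2 =>
      nds1_cnode C1 hk (by omega) h2 (Or.inl (hS₀ v hv)))
    (fun v hv m' h1 h2 => by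
      rcases Finset.mem_union.mp hv with hv | hv
      · obtain ⟨i', rfl⟩ := mem_SU.mp hv
        by_cases hii : i' = i
        · subst hii; exact nds1_cnode C1 hk (by omega) h2 (Or.inr (Or.inl rfl))
        · exact nds1_cnode C1 hk (by omega) h2 (Or.inl (by simpa [bidx] using hii))
      · rw [Finset.mem_singleton] at hv
        exact nds1_cnode C1 hk (by omega) h2 (Or.inr (Or.inr ⟨0, hv, by omega⟩)))
    (fun v hv hne h2 => by
      rcases Finset.mem_union.mp hv with hv | hv
      · obtain ⟨i', rfl⟩ := mem_SU.mp hv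
        by_cases hii : i' = i
        · subst hii; exact nds1_cnode C1 hk (by omega) h2 (Or.inr (Or.inl rfl))
        · exact nds1_cnode C1 hk (by omega) h2 (Or.inl (by simpa [bidx] using hii))
      · rw [Finset.mem_singleton] at hv
        exact absurd hv hne)
    (Finset.mem_union.mpr (Or.inr (Finset.mem_singleton_self _))) m (by omega) hm
  rw [Finset.union_comm (SU n k) {cnode i 0}] at heng
  exact jci_contraction T0 heng

end Sound2

section Sound3

open Classical

variable {Ω γ : Type} {μ : PMF Ω}

/-- `y ~ y'` : the posterior of `U` given `Yv = y` equals that given `Yv = y'`. -/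
def pRel (μ : PMF Ω) (U : Ω → γ) (Yv : Ω → ℕ) (y y' : ℕ) : Prop :=
  ∀ u, pr μ {ω | U ω = u ∧ Yv ω = y} * pr μ {ω | Yv ω = y'}
    = pr μ {ω | U ω = u ∧ Yv ω = y'} * pr μ {ω | Yv ω = y}

/-- Canonical representative of the posterior class. -/
noncomputable def clsOf (μ : PMF Ω) (U : Ω → γ) (Yv : Ω → ℕ) (y : ℕ) : ℕ :=
  sInf {y' | pr μ {ω | Yv ω = y'} ≠ 0 ∧ pRel μ U Yv y y'}

variable {U : Ω → γ} {Yv : Ω → ℕ}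

lemma pRel_refl (y : ℕ) : pRel μ U Yv y y := fun _ => rfl

lemma pRel_symm {y y' : ℕ} (h : pRel μ U Yv y y') : pRel μ U Yv y' y :=
  fun u => (h u).symm

lemma pRel_trans {y y' y'' : ℕ} (hq : pr μ {ω | Yv ω = y'} ≠ 0)
    (h1 : pRel μ U Yv y y') (h2 : pRel μ U Yv y' y'') : pRel μ U Yv y y'' := by
  intro u
  apply ennreal_cancel hq (pr_ne_top μ _)
  calc pr μ {ω | U ω = u ∧ Yv ω = y} * pr μ {ω | Yv ω = y''} * pr μ {ω | Yv ω = y'}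
      = pr μ {ω | U ω = u ∧ Yv ω = y} * pr μ {ω | Yv ω = y'} * pr μ {ω | Yv ω = y''} := by
        ring
  _ = pr μ {ω | U ω = u ∧ Yv ω = y'} * pr μ {ω | Yv ω = y} * pr μ {ω | Yv ω = y''} := by
        rw [h1 u]
  _ = pr μ {ω | U ω = u ∧ Yv ω = y'} * pr μ {ω | Yv ω = y''} * pr μ {ω | Yv ω = y} := by
        ring
  _ = pr μ {ω | U ω = u ∧ Yv ω = y''} * pr μ {ω | Yv ω = y'} * pr μ {ω | Yv ω = y} := by
        rw [h2 u]
  _ = pr μ {ω | U ω = u ∧ Yv ω = y''} * pr μ {ω | Yv ω = y} * pr μ {ω | Yv ω = y'} := by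
        ring

lemma clsOf_spec {y : ℕ} (hy : pr μ {ω | Yv ω = y} ≠ 0) :
    pr μ {ω | Yv ω = clsOf μ U Yv y} ≠ 0 ∧ pRel μ U Yv y (clsOf μ U Yv y) :=
  Nat.sInf_mem (⟨y, hy, pRel_refl y⟩ : {y' | pr μ {ω | Yv ω = y'} ≠ 0 ∧ pRel μ U Yv y y'}.Nonempty)

lemma clsOf_eq_iff {y y' : ℕ} (hy : pr μ {ω | Yv ω = y} ≠ 0)
    (hy' : pr μ {ω | Yv ω = y'} ≠ 0) :
    clsOf μ U Yv y = clsOf μ U Yv y' ↔ pRel μ U Yv y y' := by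
  constructor
  · intro h
    obtain ⟨hq1, hr1⟩ := clsOf_spec (U := U) hy
    obtain ⟨hq2, hr2⟩ := clsOf_spec (U := U) hy'
    rw [h] at hr1
    exact pRel_trans hq2 hr1 (pRel_symm hr2)
  · intro h
    have hset : {y'' | pr μ {ω | Yv ω = y''} ≠ 0 ∧ pRel μ U Yv y y''}
        = {y'' | pr μ {ω | Yv ω = y''} ≠ 0 ∧ pRel μ U Yv y' y''} := by
      ext y''
      simp only [Set.mem_setOf_eq, and_congr_right_iff]
      intro hq
      constructor
      · intro hr
        exact pRel_trans hy (pRel_symm h) hr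
      · intro hr
        exact pRel_trans hy' h hr
    rw [clsOf, clsOf, hset]

lemma pr_yval_ne_zero {ω : Ω} (hω : ω ∈ μ.support) : pr μ {ω' | Yv ω' = Yv ω} ≠ 0 :=
  (pr_pos (E := {ω' | Yv ω' = Yv ω}) hω rfl).ne'

/-- Posterior transport: if the posteriors of `U` given `A` and given `B` determine
each other (two conditional independences), then equal `B`-values give related `A`-values. -/
lemma pRel_of_same_B {A B : Ω → ℕ}
    (hAB : CondIndep μ U A B) (hBA : CondIndep μ U B A) {ω ω' : Ω}
    (hω : ω ∈ μ.support) (hω' : ω' ∈ μ.support) (hB : B ω = B ω') :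
    pRel μ U A (A ω) (A ω') := by
  intro u
  have e1 := posterior_exchange hAB hBA hω u
  have e2 := posterior_exchange hAB hBA hω' u
  rw [← hB] at e2
  have ht : pr μ {ω₁ | B ω₁ = B ω} ≠ 0 := (pr_pos (E := {ω₁ | B ω₁ = B ω}) hω rfl).ne'
  apply ennreal_cancel ht (pr_ne_top μ _)
  calc pr μ {ω₁ | U ω₁ = u ∧ A ω₁ = A ω} * pr μ {ω₁ | A ω₁ = A ω'} * pr μ {ω₁ | B ω₁ = B ω}
      = (pr μ {ω₁ | U ω₁ = u ∧ A ω₁ = A ω} * pr μ {ω₁ | B ω₁ = B ω})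
          * pr μ {ω₁ | A ω₁ = A ω'} := by ring
  _ = (pr μ {ω₁ | U ω₁ = u ∧ B ω₁ = B ω} * pr μ {ω₁ | A ω₁ = A ω})
          * pr μ {ω₁ | A ω₁ = A ω'} := by rw [e1]
  _ = (pr μ {ω₁ | U ω₁ = u ∧ B ω₁ = B ω} * pr μ {ω₁ | A ω₁ = A ω'})
          * pr μ {ω₁ | A ω₁ = A ω} := by ring
  _ = (pr μ {ω₁ | U ω₁ = u ∧ A ω₁ = A ω'} * pr μ {ω₁ | B ω₁ = B ω})
          * pr μ {ω₁ | A ω₁ = A ω} := by rw [e2]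
  _ = pr μ {ω₁ | U ω₁ = u ∧ A ω₁ = A ω'} * pr μ {ω₁ | A ω₁ = A ω}
          * pr μ {ω₁ | B ω₁ = B ω} := by ring

lemma pos_transfer {A B : Ω → ℕ}
    (hAB : CondIndep μ U A B) (hBA : CondIndep μ U B A) {ω : Ω}
    (hω : ω ∈ μ.support) (u : γ) :
    pr μ {ω₁ | U ω₁ = u ∧ A ω₁ = A ω} ≠ 0 ↔ pr μ {ω₁ | U ω₁ = u ∧ B ω₁ = B ω} ≠ 0 := by
  have e1 := posterior_exchange hAB hBA hω u
  have hA : pr μ {ω₁ | A ω₁ = A ω} ≠ 0 := (pr_pos (E := {ω₁ | A ω₁ = A ω}) hω rfl).ne'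
  have hB : pr μ {ω₁ | B ω₁ = B ω} ≠ 0 := (pr_pos (E := {ω₁ | B ω₁ = B ω}) hω rfl).ne'
  constructor
  · intro h
    intro hc
    rw [hc, zero_mul] at e1
    exact (mul_ne_zero h hB) e1.symm
  · intro h
    intro hc
    rw [hc, zero_mul] at e1
    exact (mul_ne_zero h hA) e1

lemma pRel_pos_congr {y y' : ℕ} (h : pRel μ U Yv y y')
    (hy : pr μ {ω | Yv ω = y} ≠ 0) (hy' : pr μ {ω | Yv ω = y'} ≠ 0) (u : γ) :
    pr μ {ω | U ω = u ∧ Yv ω = y} ≠ 0 ↔ pr μ {ω | U ω = u ∧ Yv ω = y'} ≠ 0 := by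
  have e1 := h u
  constructor
  · intro hh hc
    rw [hc, zero_mul] at e1
    exact (mul_ne_zero hh hy') e1
  · intro hh hc
    rw [hc, zero_mul] at e1
    exact (mul_ne_zero hh hy) e1.symm

/-- Posterior consistency: conditioning on the class gives the same posterior. -/
lemma post_consistency (U : Ω → γ) (Yv : Ω → ℕ) (u : γ) (y : ℕ) :
    pr μ {ω | U ω = u ∧ Yv ω = y} * pr μ {ω | clsOf μ U Yv (Yv ω) = clsOf μ U Yv y}
      = pr μ {ω | U ω = u ∧ clsOf μ U Yv (Yv ω) = clsOf μ U Yv y} * pr μ {ω | Yv ω = y} := by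
  set f := clsOf μ U Yv with hf
  set v := f y with hv
  have hφ : ∀ ω ∈ μ.support, f (Yv ω) = f (Yv ω) := fun _ _ => rfl
  have e1 := pr_map_fiber' (μ := μ) (X := Yv) (X' := fun ω => f (Yv ω)) (φ := f) hφ v
  have e2' := pr_map_fiber (μ := μ) (X := Yv) (X' := fun ω => f (Yv ω)) (φ := f) hφ v
    (fun ω => U ω = u)
  have e2 : pr μ {ω | U ω = u ∧ f (Yv ω) = v}
      = ∑' y' : ℕ, if f y' = v then pr μ {ω | U ω = u ∧ Yv ω = y'} else 0 := by
    rw [show {ω | U ω = u ∧ f (Yv ω) = v} = {ω | f (Yv ω) = v ∧ U ω = u} by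
      ext ω; simp only [Set.mem_setOf_eq]; tauto, e2']
    refine tsum_congr fun y' => ?_
    by_cases hy' : f y' = v
    · rw [if_pos hy', if_pos hy']
      congr 1
      ext ω; simp only [Set.mem_setOf_eq]; tauto
    · rw [if_neg hy', if_neg hy']
  rw [e1, e2, ← ENNReal.tsum_mul_left, ← ENNReal.tsum_mul_right]
  refine tsum_congr fun y' => ?_
  by_cases hy' : f y' = v
  · rw [if_pos hy', if_pos hy']
    -- need : pr{u, Yv=y} * pr{Yv=y'} = pr{u, Yv=y'} * pr{Yv=y}
    by_cases hyz : pr μ {ω | Yv ω = y} = 0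
    · have h1 : pr μ {ω | U ω = u ∧ Yv ω = y} = 0 := by
        refine le_antisymm (le_trans (pr_mono ?_) (le_of_eq hyz)) zero_le
        intro ω hω; exact hω.2
      rw [h1, hyz, zero_mul, mul_zero]
    · by_cases hyz' : pr μ {ω | Yv ω = y'} = 0
      · have h1 : pr μ {ω | U ω = u ∧ Yv ω = y'} = 0 := by
          refine le_antisymm (le_trans (pr_mono ?_) (le_of_eq hyz')) zero_le
          intro ω hω; exact hω.2
        rw [h1, hyz', mul_zero, zero_mul]
      · have hrel : pRel μ U Yv y y' := by
          rw [← clsOf_eq_iff hyz hyz']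
          rw [← hf] at *
          rw [hy', hv]
        exact hrel u
  · rw [if_neg hy', if_neg hy', zero_mul, mul_zero]

end Sound3

section Sound4

open Classical

variable {Ω γ δ : Type} {μ : PMF Ω}

lemma pr_le_of_subset_conj {E F : Set Ω} (h : E ⊆ F) (hF : pr μ F = 0) : pr μ E = 0 :=
  le_antisymm (le_trans (pr_mono h) (le_of_eq hF)) zero_le

/-- The fundamental property of minimal sufficient statistics: if `Yv ⊥⊥ W | U`,
then `Yv ⊥⊥ W | cls(Yv)` where `cls` is the posterior class of `U` given `Yv`. -/
lemma ci_mss {U : Ω → γ} {Yv : Ω → ℕ} {W : Ω → δ}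
    (hCI : CondIndep μ Yv W U) :
    CondIndep μ Yv W (fun ω => clsOf μ U Yv (Yv ω)) := by
  set f := clsOf μ U Yv with hfdef
  have hCIV : CondIndep μ (fun ω => f (Yv ω)) W U :=
    ci_map_left hCI (φ := f) (fun ω _ => rfl)
  intro y w v
  by_cases hyv : f y = v
  · -- reduce the class events
    have E1 : {ω | Yv ω = y ∧ W ω = w ∧ f (Yv ω) = v} = {ω | Yv ω = y ∧ W ω = w} := by
      ext ω; simp only [Set.mem_setOf_eq]
      exact ⟨fun h => ⟨h.1, h.2.1⟩, fun h => ⟨h.1, h.2, by rw [h.1, hyv]⟩⟩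
    have E2 : {ω | Yv ω = y ∧ f (Yv ω) = v} = {ω | Yv ω = y} := by
      ext ω; simp only [Set.mem_setOf_eq]
      exact ⟨fun h => h.1, fun h => ⟨h, by rw [h, hyv]⟩⟩
    rw [E1, E2]
    -- expand over u
    have eA : pr μ {ω | Yv ω = y ∧ W ω = w}
        = ∑' u : γ, pr μ {ω | U ω = u ∧ Yv ω = y ∧ W ω = w} := by
      rw [pr_partition μ U {ω | Yv ω = y ∧ W ω = w}]
      refine tsum_congr fun u => ?_
      congr 1
      ext ω; simp only [Set.mem_setOf_eq, Set.mem_inter_iff]; tauto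
    have eB : pr μ {ω | W ω = w ∧ f (Yv ω) = v}
        = ∑' u : γ, pr μ {ω | U ω = u ∧ W ω = w ∧ f (Yv ω) = v} := by
      rw [pr_partition μ U {ω | W ω = w ∧ f (Yv ω) = v}]
      refine tsum_congr fun u => ?_
      congr 1
      ext ω; simp only [Set.mem_setOf_eq, Set.mem_inter_iff]; tauto
    rw [eA, eB, ← ENNReal.tsum_mul_right, ← ENNReal.tsum_mul_left]
    refine tsum_congr fun u => ?_
    -- termwise identity
    by_cases hu : pr μ {ω | U ω = u} = 0
    · have h1 : pr μ {ω | U ω = u ∧ Yv ω = y ∧ W ω = w} = 0 :=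
        pr_le_of_subset_conj (fun ω hω => hω.1) hu
      have h2 : pr μ {ω | U ω = u ∧ W ω = w ∧ f (Yv ω) = v} = 0 :=
        pr_le_of_subset_conj (fun ω hω => hω.1) hu
      rw [h1, h2, zero_mul, mul_zero]
    · apply ennreal_cancel hu (pr_ne_top μ _)
      -- reorder events in hCI, hCIV
      have g1 := hCI y w u
      have s1 : {ω | Yv ω = y ∧ W ω = w ∧ U ω = u} = {ω | U ω = u ∧ Yv ω = y ∧ W ω = w} := by
        ext ω; simp only [Set.mem_setOf_eq]; tauto
      have s2 : {ω | Yv ω = y ∧ U ω = u} = {ω | U ω = u ∧ Yv ω = y} := by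
        ext ω; simp only [Set.mem_setOf_eq]; tauto
      have s3 : {ω | W ω = w ∧ U ω = u} = {ω | U ω = u ∧ W ω = w} := by
        ext ω; simp only [Set.mem_setOf_eq]; tauto
      rw [s1, s2, s3] at g1
      have g2 := hCIV v w u
      have s4 : {ω | f (Yv ω) = v ∧ W ω = w ∧ U ω = u}
          = {ω | U ω = u ∧ W ω = w ∧ f (Yv ω) = v} := by
        ext ω; simp only [Set.mem_setOf_eq]; tauto
      have s5 : {ω | f (Yv ω) = v ∧ U ω = u} = {ω | U ω = u ∧ f (Yv ω) = v} := by
        ext ω; simp only [Set.mem_setOf_eq]; tauto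
      rw [s4, s5, s3] at g2
      have gPC := post_consistency (μ := μ) U Yv u y
      have s6 : {ω | clsOf μ U Yv (Yv ω) = clsOf μ U Yv y} = {ω | f (Yv ω) = v} := by
        ext ω; simp only [Set.mem_setOf_eq, ← hfdef, hyv]
      have s7 : {ω | U ω = u ∧ clsOf μ U Yv (Yv ω) = clsOf μ U Yv y}
          = {ω | U ω = u ∧ f (Yv ω) = v} := by
        ext ω; simp only [Set.mem_setOf_eq, ← hfdef, hyv]
      rw [s6, s7] at gPC
      -- g1 : pr{u,y,w} * pr{u} = pr{u,y} * pr{u,w}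
      -- g2 : pr{u,w,v} * pr{u} = pr{u,v} * pr{u,w}
      -- gPC : pr{u,y} * pr{v} = pr{u,v} * pr{y}
      calc pr μ {ω | U ω = u ∧ Yv ω = y ∧ W ω = w} * pr μ {ω | f (Yv ω) = v}
            * pr μ {ω | U ω = u}
          = (pr μ {ω | U ω = u ∧ Yv ω = y ∧ W ω = w} * pr μ {ω | U ω = u})
            * pr μ {ω | f (Yv ω) = v} := by ring
      _ = (pr μ {ω | U ω = u ∧ Yv ω = y} * pr μ {ω | U ω = u ∧ W ω = w})
            * pr μ {ω | f (Yv ω) = v} := by rw [g1]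
      _ = (pr μ {ω | U ω = u ∧ Yv ω = y} * pr μ {ω | f (Yv ω) = v})
            * pr μ {ω | U ω = u ∧ W ω = w} := by ring
      _ = (pr μ {ω | U ω = u ∧ f (Yv ω) = v} * pr μ {ω | Yv ω = y})
            * pr μ {ω | U ω = u ∧ W ω = w} := by rw [gPC]
      _ = (pr μ {ω | U ω = u ∧ W ω = w} * pr μ {ω | U ω = u ∧ f (Yv ω) = v})
            * pr μ {ω | Yv ω = y} := by ring
      _ = (pr μ {ω | U ω = u ∧ W ω = w ∧ f (Yv ω) = v} * pr μ {ω | U ω = u})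
            * pr μ {ω | Yv ω = y} := by rw [g2]; ring
      _ = pr μ {ω | Yv ω = y} * pr μ {ω | U ω = u ∧ W ω = w ∧ f (Yv ω) = v}
            * pr μ {ω | U ω = u} := by ring
  · have h1 : pr μ {ω | Yv ω = y ∧ W ω = w ∧ f (Yv ω) = v} = 0 := by
      refine pr_eq_zero.mpr fun ω _ hm => ?_
      obtain ⟨hY, -, hV⟩ := hm
      rw [hY] at hV
      exact hyv hV
    have h2 : pr μ {ω | Yv ω = y ∧ f (Yv ω) = v} = 0 := by
      refine pr_eq_zero.mpr fun ω _ hm => ?_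
      obtain ⟨hY, hV⟩ := hm
      rw [hY] at hV
      exact hyv hV
    rw [h1, h2, zero_mul, zero_mul]

variable {n k : ℕ} {X : BNode n k → Ω → ℕ} {α : Type}

lemma ci_jnt_single_left {B : Ω → α} {C : Ω → δ} {v : BNode n k}
    (h : CondIndep μ (Jnt X {v}) B C) : CondIndep μ (X v) B C :=
  ci_map_left h (φ := fun g : BNode n k → ℕ => g v) (fun ω _ => jnt_single_val v ω)

lemma jnt_insert_eq_iff {S : Finset (BNode n k)} {v : BNode n k} {ω₁ ω : Ω} :
    Jnt X (insert v S) ω₁ = Jnt X (insert v S) ω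
      ↔ X v ω₁ = X v ω ∧ Jnt X S ω₁ = Jnt X S ω := by
  constructor
  · intro h
    constructor
    · have := congrFun h v
      simpa [Jnt, Finset.mem_insert_self] using this
    · funext w
      by_cases hw : w ∈ S
      · have := congrFun h w
        have hw' : w ∈ insert v S := Finset.mem_insert_of_mem hw
        simpa [Jnt, hw, hw'] using this
      · simp [Jnt, hw]
  · rintro ⟨h1, h2⟩
    funext w
    by_cases hw : w ∈ insert v S
    · rcases Finset.mem_insert.mp hw with rfl | hw'
      · simpa [Jnt, hw] using h1
      · have := congrFun h2 w
        simpa [Jnt, hw, hw'] using this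
    · simp [Jnt, hw]

end Sound4

section Sound5

open Classical

lemma soundness_main {n k : ℕ} (hk : 1 ≤ k)
    (C1 C2 : Finset (Fin n)) (A : Fin k → Finset (Fin n)) (b : Fin k → Fin n)
    (hbA : ∀ j, b j ∉ A j) (a0 b0 b0' : Fin n)
    (hb0 : b0 ≠ a0) (hb0'a : b0' ≠ a0) (hb0'b : b0' ≠ b0)
    (R : ∀ (Ω : Type) (μ : PMF Ω) (V : Fin n → Ω → ℕ),
        (∀ i, FinSupp μ (V i)) →
        MutIndepOn μ V C1 → MutIndepOn μ V C2 →
        (∀ j : Fin k, FunDep μ (jointFin V (A j)) (V (b j))) →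
        FunDep μ (V a0) (V b0))
    (Ω : Type) (μ : PMF Ω) (X : BNode n k → Ω → ℕ)
    (hfin : ∀ v, FinSupp μ (X v))
    (hBN1 : SatisfiesBN μ X (edge1 n k C1))
    (hBN2 : SatisfiesBN μ X (edge2 n k C2 A b)) :
    CondIndep μ (X (.y b0)) (X (.y b0')) (X (.y a0)) := by
  set Uv : Ω → (BNode n k → ℕ) := Jnt X (SU n k) with hUv
  set V : Fin n → Ω → ℕ :=
    fun i ω => clsOf μ Uv (X (.y i)) (X (.y i) ω) with hV
  -- finite supports
  have hVfin : ∀ i, FinSupp μ (V i) := by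
    intro i
    have : V i '' μ.support
        = (clsOf μ Uv (X (.y i))) '' (X (.y i) '' μ.support) := by
      rw [← Set.image_comp]
      rfl
    rw [FinSupp, this]
    exact (hfin (.y i)).image _
  -- V i is a function of X_i^j for every j
  have hVx : ∀ (i : Fin n) (j : Fin k), FunDep μ (X (.x i j)) (V i) := by
    intro i j
    apply funDep_of_fiber_const
    intro ω hω ω' hω' hXeq
    have hrel := pRel_of_same_B (U := Uv) (A := X (.y i)) (B := X (.x i j))
      (ci_U_Y_X hk hBN1 hBN2 i j) (ci_U_X_Y hk hBN1 i j) hω hω' hXeq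
    exact (clsOf_eq_iff (pr_yval_ne_zero hω) (pr_yval_ne_zero hω')).mpr hrel
  -- V (b j) is a function of the joint (X_a^j)_{a ∈ A j}
  have hAstep : ∀ j : Fin k,
      FunDep μ (Jnt X ((A j).image (fun a => BNode.x a j))) (V (b j)) := by
    intro j
    have hext := bn_extract hBN2 (.x (b j) j) (S := {BNode.y (b j)})
        (T := (A j).image (fun a => BNode.x a j))
      (fun v hv => by
        rw [Finset.mem_singleton] at hv
        subst hv
        exact nds2_xb C2 A b (fun i' j' h => by injection h))
      (fun v => by
        constructor
        · intro hv
          obtain ⟨a, ha, rfl⟩ := Finset.mem_image.mp hv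
          exact (pa2_xb_iff C2 A b j _).mpr ⟨a, ha, rfl⟩
        · intro hv
          obtain ⟨a, ha, rfl⟩ := (pa2_xb_iff C2 A b j v).mp hv
          exact Finset.mem_image.mpr ⟨a, ha, rfl⟩)
    have hci := ci_jnt_single_right hext
    exact funDep_of_selfCI hci (hVx (b j) j) ⟨clsOf μ Uv (X (.y (b j))), fun ω _ => rfl⟩
  -- V (b j) is a function of U
  have hKstep : ∀ j : Fin k, FunDep μ Uv (V (b j)) := by
    intro j
    have htup := ci_tuple hk hBN1 (b j)
      (S₀ := (A j).image (fun a => BNode.x a j))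
      (fun v hv => by
        obtain ⟨a, ha, rfl⟩ := Finset.mem_image.mp hv
        have : a ≠ b j := fun hc => hbA j (hc ▸ ha)
        simpa [bidx] using this)
      (m := 0) (by omega)
    rw [cint_self, Finset.union_empty, cnode_zero] at htup
    have hci : CondIndep μ (X (.y (b j)))
        (Jnt X ((A j).image (fun a => BNode.x a j))) Uv :=
      ci_jnt_single_left (condIndep_symm htup)
    exact funDep_of_selfCI hci ⟨clsOf μ Uv (X (.y (b j))), fun ω _ => rfl⟩ (hAstep j)
  -- functional dependence among the classes (core of the argument)
  have hP2 : ∀ j : Fin k, FunDep μ (jointFin V (A j)) (V (b j)) := by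
    intro j
    apply funDep_of_fiber_const
    intro ω hω ω₀ hω₀ hfib
    have hVa : ∀ a ∈ A j, V a ω = V a ω₀ := fun a ha => congrFun hfib ⟨a, ha⟩
    have hrel : ∀ a ∈ A j, pRel μ Uv (X (.y a)) (X (.y a) ω) (X (.y a) ω₀) :=
      fun a ha => (clsOf_eq_iff (pr_yval_ne_zero hω) (pr_yval_ne_zero hω₀)).mp (hVa a ha)
    set u₀ : BNode n k → ℕ := Uv ω₀ with hu₀
    have claim : ∀ B : Finset (Fin n), B ⊆ A j →
        0 < pr μ {ω₁ | Uv ω₁ = u₀ ∧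
          Jnt X (B.image (fun a => BNode.x a j)) ω₁
            = Jnt X (B.image (fun a => BNode.x a j)) ω} := by
      intro B
      induction B using Finset.induction_on with
      | empty =>
        intro _
        refine pr_pos hω₀ ⟨rfl, ?_⟩
        rw [Finset.image_empty]
        exact jnt_empty_const X ω₀ ω
      | @insert a B' ha ih =>
        intro hsub
        have haA : a ∈ A j := hsub (Finset.mem_insert_self a B')
        have hB'A : B' ⊆ A j := fun x hx => hsub (Finset.mem_insert_of_mem hx)
        have IH := ih hB'A
        -- the conditional independence X_a^j ⊥⊥ (X_{B'}^j) | U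
        have htup := ci_tuple hk hBN1 a (S₀ := B'.image (fun a' => BNode.x a' j))
          (fun v hv => by
            obtain ⟨a', ha', rfl⟩ := Finset.mem_image.mp hv
            have : a' ≠ a := fun hc => ha (hc ▸ ha')
            simpa [bidx] using this)
          (m := (j : ℕ) + 1) (by omega)
        have hdec := jci_decomp htup (Finset.singleton_subset_iff.mpr
          (Finset.mem_union_right _ (mem_cint.mpr ⟨(j : ℕ) + 1, by omega, le_refl _, rfl⟩)))
        rw [cnode_coe_succ] at hdec
        have hci : CondIndep μ (X (.x a j)) (Jnt X (B'.image (fun a' => BNode.x a' j))) Uv :=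
          ci_jnt_single_left (condIndep_symm hdec)
        -- positivity of pr{U = u₀, X_a^j = X_a^j ω}
        have p0 : pr μ {ω₁ | Uv ω₁ = u₀ ∧ X (.y a) ω₁ = X (.y a) ω₀} ≠ 0 :=
          (pr_pos (E := {ω₁ | Uv ω₁ = u₀ ∧ X (.y a) ω₁ = X (.y a) ω₀}) hω₀ ⟨rfl, rfl⟩).ne'
        have p1 : pr μ {ω₁ | Uv ω₁ = u₀ ∧ X (.y a) ω₁ = X (.y a) ω} ≠ 0 :=
          (pRel_pos_congr (hrel a haA) (pr_yval_ne_zero hω) (pr_yval_ne_zero hω₀) u₀).mpr p0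
        have p2 : pr μ {ω₁ | Uv ω₁ = u₀ ∧ X (.x a j) ω₁ = X (.x a j) ω} ≠ 0 :=
          (pos_transfer (U := Uv) (A := X (.y a)) (B := X (.x a j))
            (ci_U_Y_X hk hBN1 hBN2 a j) (ci_U_X_Y hk hBN1 a j) hω u₀).mp p1
        -- use the conditional independence to get joint positivity
        have hcieq := hci (X (.x a j) ω)
          (Jnt X (B'.image (fun a' => BNode.x a' j)) ω) u₀
        have s1 : {ω₁ | X (.x a j) ω₁ = X (.x a j) ω ∧ Uv ω₁ = u₀}
            = {ω₁ | Uv ω₁ = u₀ ∧ X (.x a j) ω₁ = X (.x a j) ω} := by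
          ext ω₁; simp only [Set.mem_setOf_eq]; tauto
        have s2 : {ω₁ | Jnt X (B'.image (fun a' => BNode.x a' j)) ω₁
              = Jnt X (B'.image (fun a' => BNode.x a' j)) ω ∧ Uv ω₁ = u₀}
            = {ω₁ | Uv ω₁ = u₀ ∧ Jnt X (B'.image (fun a' => BNode.x a' j)) ω₁
              = Jnt X (B'.image (fun a' => BNode.x a' j)) ω} := by
          ext ω₁; simp only [Set.mem_setOf_eq]; tauto
        rw [s1, s2] at hcieq
        have hrhs : pr μ {ω₁ | Uv ω₁ = u₀ ∧ X (.x a j) ω₁ = X (.x a j) ω}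
            * pr μ {ω₁ | Uv ω₁ = u₀ ∧ Jnt X (B'.image (fun a' => BNode.x a' j)) ω₁
              = Jnt X (B'.image (fun a' => BNode.x a' j)) ω} ≠ 0 :=
          mul_ne_zero p2 IH.ne'
        rw [← hcieq] at hrhs
        have htriple : pr μ {ω₁ | X (.x a j) ω₁ = X (.x a j) ω
            ∧ Jnt X (B'.image (fun a' => BNode.x a' j)) ω₁
              = Jnt X (B'.image (fun a' => BNode.x a' j)) ω ∧ Uv ω₁ = u₀} ≠ 0 :=
          fun hc => hrhs (by rw [hc, zero_mul])
        have hE : {ω₁ | Uv ω₁ = u₀ ∧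
            Jnt X ((insert a B').image (fun a' => BNode.x a' j)) ω₁
              = Jnt X ((insert a B').image (fun a' => BNode.x a' j)) ω}
            = {ω₁ | X (.x a j) ω₁ = X (.x a j) ω
            ∧ Jnt X (B'.image (fun a' => BNode.x a' j)) ω₁
              = Jnt X (B'.image (fun a' => BNode.x a' j)) ω ∧ Uv ω₁ = u₀} := by
          ext ω₁
          simp only [Set.mem_setOf_eq, Finset.image_insert]
          rw [jnt_insert_eq_iff]
          tauto
        rw [hE]
        exact pos_iff_ne_zero.mpr htriple
    obtain ⟨ω₁, hω₁, hm1, hm2⟩ := exists_mem_of_pr_pos (claim (A j) (le_refl _))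
    obtain ⟨F, hF⟩ := hAstep j
    obtain ⟨K, hK⟩ := hKstep j
    calc V (b j) ω = F (Jnt X ((A j).image (fun a => BNode.x a j)) ω) := hF ω hω
    _ = F (Jnt X ((A j).image (fun a => BNode.x a j)) ω₁) := by rw [hm2]
    _ = V (b j) ω₁ := (hF ω₁ hω₁).symm
    _ = K (Uv ω₁) := hK ω₁ hω₁
    _ = K (Uv ω₀) := by rw [hm1]
    _ = V (b j) ω₀ := (hK ω₀ hω₀).symm
  -- mutual independence over C1
  have hMI1 : MutIndepOn μ V C1 := by
    intro i hi
    set S₁ : Finset (BNode n k) := (C1.erase i).image BNode.y with hS₁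
    have hS₁mem : ∀ v ∈ S₁, ∃ m, m ∈ C1 ∧ m ≠ i ∧ v = BNode.y m := by
      intro v hv
      obtain ⟨m, hm, rfl⟩ := Finset.mem_image.mp hv
      obtain ⟨hne, hm'⟩ := Finset.mem_erase.mp hm
      exact ⟨m, hm', hne, rfl⟩
    have hbase0 := bn_extract hBN1 (.u i) (S := S₁) (T := ∅)
      (fun v hv => by
        obtain ⟨m, hm, hne, rfl⟩ := hS₁mem v hv
        exact nds1_u_mem hi (by simpa [bidx] using hm) (by simpa [bidx] using hne))
      (fun v => iff_of_false (Finset.notMem_empty v) (pa1_u_mem_iff hi v))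
    have hbase : Indep μ (Jnt X S₁) (Jnt X {BNode.u i}) := by
      have h1 := indep_of_ci_const (jnt_empty_const X) hbase0
      have h2 := indep_symm h1
      exact indep_map_right h2 (φ := fun a w => if w = BNode.u i then a else 0)
        (fun ω _ => jnt_single_of _ ω)
    have hT0 := bn_extract hBN1 (.y i) (S := S₁) (T := {BNode.u i})
      (fun v hv => by
        obtain ⟨m, hm, hne, rfl⟩ := hS₁mem v hv
        exact nds1_y C1 (by simpa [bidx] using hne))
      (fun v => by rw [Finset.mem_singleton]; exact (pa1_y_iff C1 i v).symm)
    have hT0' : CondIndep μ (Jnt X S₁) (Jnt X {BNode.y i}) (Jnt X ({BNode.u i} ∪ ∅)) := by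
      rw [Finset.union_empty]
      exact ci_single_jnt_right (condIndep_symm hT0)
    have hc1 := jci_contraction (ci_of_indep_const (jnt_empty_const X) hbase) hT0'
    have hind := indep_of_ci_const (jnt_empty_const X) hc1
    have hind2 : Indep μ (Jnt X S₁) (Jnt X {BNode.y i}) :=
      indep_map_right hind (φ := fun g v => if v ∈ ({BNode.y i} : Finset (BNode n k)) then g v else 0)
        (fun ω _ => jnt_mono (Finset.subset_union_right) ω)
    have hind3 := indep_symm hind2
    have hleft : Indep μ (V i) (Jnt X S₁) :=
      indep_map_left hind3 (φ := fun g => clsOf μ Uv (X (.y i)) (g (BNode.y i)))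
        (fun ω _ => by
          simp only [hV, Jnt, Finset.mem_singleton_self, if_pos])
    exact indep_map_right hleft
      (φ := fun g => fun j' : {j // j ∈ C1 ∧ j ≠ i} =>
        clsOf μ Uv (X (.y j'.1)) (g (BNode.y j'.1)))
      (fun ω _ => by
        funext j'
        have hmem : BNode.y j'.1 ∈ S₁ :=
          Finset.mem_image.mpr ⟨j'.1, Finset.mem_erase.mpr ⟨j'.2.2, j'.2.1⟩, rfl⟩
        simp only [hV, Jnt, hmem, if_pos])
  -- mutual independence over C2
  have hMI2 : MutIndepOn μ V C2 := by
    intro i hi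
    set S₁ : Finset (BNode n k) := (C2.erase i).image BNode.y with hS₁
    have hS₁mem : ∀ v ∈ S₁, ∃ m, m ∈ C2 ∧ m ≠ i ∧ v = BNode.y m := by
      intro v hv
      obtain ⟨m, hm, rfl⟩ := Finset.mem_image.mp hv
      obtain ⟨hne, hm'⟩ := Finset.mem_erase.mp hm
      exact ⟨m, hm', hne, rfl⟩
    have hbase0 := bn_extract hBN2 (.u i) (S := S₁) (T := ∅)
      (fun v hv => by
        obtain ⟨m, hm, hne, rfl⟩ := hS₁mem v hv
        exact nds2_u_mem C2 A b hi (by simpa [bidx] using hm) (by simpa [bidx] using hne)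
          (fun i' j' h => by injection h))
      (fun v => iff_of_false (Finset.notMem_empty v) (pa2_u_mem_iff C2 A b hi v))
    have hbase : Indep μ (Jnt X S₁) (Jnt X {BNode.u i}) := by
      have h1 := indep_of_ci_const (jnt_empty_const X) hbase0
      have h2 := indep_symm h1
      exact indep_map_right h2 (φ := fun a w => if w = BNode.u i then a else 0)
        (fun ω _ => jnt_single_of _ ω)
    have hz := bn_extract hBN2 (.z i) (S := S₁) (T := {BNode.u i})
      (fun v hv => by
        obtain ⟨m, hm, hne, rfl⟩ := hS₁mem v hv
        refine nds2_z C2 A b (by simp) ?_ (by simp)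
        intro hc
        injection hc with hc'
        exact hne hc')
      (fun v => by rw [Finset.mem_singleton]; exact (pa2_z_iff C2 A b i v).symm)
    have hz' : CondIndep μ (Jnt X S₁) (Jnt X {BNode.z i}) (Jnt X ({BNode.u i} ∪ ∅)) := by
      rw [Finset.union_empty]
      exact ci_single_jnt_right (condIndep_symm hz)
    have hc1 := jci_contraction (ci_of_indep_const (jnt_empty_const X) hbase) hz'
    have hy := bn_extract hBN2 (.y i) (S := S₁ ∪ {BNode.u i}) (T := {BNode.z i})
      (fun v hv => by
        rcases Finset.mem_union.mp hv with hv | hv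
        · obtain ⟨m, hm, hne, rfl⟩ := hS₁mem v hv
          refine nds2_y C2 A b ?_ (by simp)
          intro hc
          injection hc with hc'
          exact hne hc'
        · rw [Finset.mem_singleton] at hv
          subst hv
          exact nds2_y C2 A b (by simp) (by simp))
      (fun v => by rw [Finset.mem_singleton]; exact (pa2_y_iff C2 A b i v).symm)
    have hy2 := jci_weak_union hy
    have hy3 : CondIndep μ (Jnt X S₁) (Jnt X {BNode.y i})
        (Jnt X (({BNode.u i} ∪ {BNode.z i}) ∪ ∅)) := by
      rw [Finset.union_empty, Finset.union_comm]
      exact ci_single_jnt_right (condIndep_symm hy2)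
    have hc2 := jci_contraction hc1 hy3
    have hind := indep_of_ci_const (jnt_empty_const X) hc2
    have hind2 : Indep μ (Jnt X S₁) (Jnt X {BNode.y i}) :=
      indep_map_right hind (φ := fun g v => if v ∈ ({BNode.y i} : Finset (BNode n k)) then g v else 0)
        (fun ω _ => jnt_mono (Finset.subset_union_right) ω)
    have hind3 := indep_symm hind2
    have hleft : Indep μ (V i) (Jnt X S₁) :=
      indep_map_left hind3 (φ := fun g => clsOf μ Uv (X (.y i)) (g (BNode.y i)))
        (fun ω _ => by
          simp only [hV, Jnt, Finset.mem_singleton_self, if_pos])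
    exact indep_map_right hleft
      (φ := fun g => fun j' : {j // j ∈ C2 ∧ j ≠ i} =>
        clsOf μ Uv (X (.y j'.1)) (g (BNode.y j'.1)))
      (fun ω _ => by
        funext j'
        have hmem : BNode.y j'.1 ∈ S₁ :=
          Finset.mem_image.mpr ⟨j'.1, Finset.mem_erase.mpr ⟨j'.2.2, j'.2.1⟩, rfl⟩
        simp only [hV, Jnt, hmem, if_pos])
  -- conclusion
  obtain ⟨g, hg⟩ := R Ω μ V hVfin hMI1 hMI2 hP2
  have hFa : CondIndep μ (X (.y b0)) (Jnt X ({BNode.y b0'} ∪ {BNode.y a0})) Uv := by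
    have htup := ci_tuple hk hBN1 b0 (S₀ := {BNode.y b0'} ∪ {BNode.y a0})
      (fun v hv => by
        rcases Finset.mem_union.mp hv with hv | hv <;> rw [Finset.mem_singleton] at hv <;>
          subst hv
        · simpa [bidx] using hb0'b
        · simpa [bidx] using Ne.symm hb0)
      (m := 0) (by omega)
    rw [cint_self, Finset.union_empty, cnode_zero] at htup
    exact ci_jnt_single_left (condIndep_symm htup)
  have hFb : CondIndep μ (X (.y b0)) (Jnt X ({BNode.y b0'} ∪ {BNode.y a0})) (V b0) :=
    ci_mss hFa
  have hpair : CondIndep μ (X (.y b0))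
      (fun ω => (X (.y b0') ω, X (.y a0) ω)) (V b0) :=
    ci_map_right hFb (φ := fun g => (g (BNode.y b0'), g (BNode.y a0)))
      (fun ω _ => by simp [Jnt])
  have hwu := ci_weak_union hpair
  exact ci_congr_cond hwu (φ := Prod.snd)
    (ψ := fun t => (g (clsOf μ Uv (X (.y a0)) t), t))
    (fun ω _ => rfl)
    (fun ω hω => by
      have h1 : V b0 ω = g (V a0 ω) := hg ω hω
      simp only [Prod.mk.injEq]
      exact ⟨h1, trivial⟩)

end Sound5

section Comp

open Classical

variable {Ω : Type} {μ : PMF Ω} {n k : ℕ}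

/-- Generic helper: a node whose variable is a function of one of its parents
satisfies its local Bayesian-network condition. -/
lemma node_of_parent {E : BNode n k → BNode n k → Prop} {X : BNode n k → Ω → ℕ}
    {V : Fin n → Ω → ℕ} (hX : ∀ v, X v = V (bidx v)) (w : BNode n k)
    (p : BNode n k) (hp : E p w) (hpidx : bidx p = bidx w) :
    CondIndep μ (X w)
      (fun ω => fun v : nonDescSet E w => X v.1 ω)
      (fun ω => fun v : parentSet E w => X v.1 ω) := by
  apply ci_of_funDep_left
  refine ⟨fun g => g ⟨p, hp⟩, fun ω _ => ?_⟩
  show X w ω = X p ω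
  rw [hX w, hX p, hpidx]

lemma completeness_main (hk : 1 ≤ k)
    (C1 C2 : Finset (Fin n)) (A : Fin k → Finset (Fin n)) (b : Fin k → Fin n)
    (hbA : ∀ j, b j ∉ A j) (a0 b0 b0' : Fin n)
    (hentry1 : ∃ j : Fin k, A j = {b0} ∧ b j = b0')
    (hentry2 : ∃ j : Fin k, A j = {b0'} ∧ b j = b0)
    (L : ∀ (Ω : Type) (μ : PMF Ω) (X : BNode n k → Ω → ℕ),
        (∀ v, FinSupp μ (X v)) →
        SatisfiesBN μ X (edge1 n k C1) →
        SatisfiesBN μ X (edge2 n k C2 A b) →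
        CondIndep μ (X (.y b0)) (X (.y b0')) (X (.y a0)))
    (μ : PMF Ω) (V : Fin n → Ω → ℕ)
    (hVfin : ∀ i, FinSupp μ (V i))
    (hMI1 : MutIndepOn μ V C1) (hMI2 : MutIndepOn μ V C2)
    (hfd : ∀ j : Fin k, FunDep μ (jointFin V (A j)) (V (b j))) :
    FunDep μ (V a0) (V b0) := by
  choose F hF using hfd
  set X : BNode n k → Ω → ℕ := fun v => V (bidx v) with hXdef
  have hX : ∀ v, X v = V (bidx v) := fun v => rfl
  have hfinX : ∀ v, FinSupp μ (X v) := fun v => hVfin (bidx v)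
  -- network 1 is satisfied
  have hBN1 : SatisfiesBN μ X (edge1 n k C1) := by
    intro w
    cases w with
    | y i => exact node_of_parent hX _ (.u i) (edge1_uy.mpr rfl) rfl
    | z i =>
      exact node_of_parent hX _ (.x i ⟨k - 1, by omega⟩)
        (edge1_xz.mpr ⟨rfl, by simp⟩) rfl
    | x i j =>
      by_cases hj : (j : ℕ) = 0
      · exact node_of_parent hX _ (.y i) (edge1_yx.mpr ⟨rfl, hj⟩) rfl
      · exact node_of_parent hX _ (.x i ⟨(j : ℕ) - 1, by omega⟩)
          (edge1_xx.mpr ⟨rfl, by simp; omega⟩) rfl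
    | u i =>
      by_cases hi : i ∈ C1
      · -- parents empty, use mutual independence
        have hc : ∀ ω ω', (fun v : parentSet (edge1 n k C1) (.u i) => X v.1 ω)
            = (fun v : parentSet (edge1 n k C1) (.u i) => X v.1 ω') := by
          intro ω ω'
          funext v
          exact absurd v.2 (pa1_u_mem_iff hi v.1)
        apply ci_of_indep_const hc
        have hK := hMI1 i hi
        exact indep_map_right hK
          (φ := fun g => fun v : nonDescSet (edge1 n k C1) (.u i) =>
            g ⟨bidx v.1, (ndsub1_u_mem hk hi v.2).1, (ndsub1_u_mem hk hi v.2).2⟩)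
          (fun ω _ => rfl)
      · -- every non-descendant is a function of the parents
        apply ci_of_funDep_right
        refine ⟨fun g => fun v : nonDescSet (edge1 n k C1) (.u i) =>
          g ⟨BNode.u (bidx v.1), ndsub1_u_not hk hi v.2⟩, fun ω _ => rfl⟩
  -- network 2 is satisfied
  have hBN2 : SatisfiesBN μ X (edge2 n k C2 A b) := by
    intro w
    cases w with
    | z i => exact node_of_parent hX _ (.u i) (edge2_uz.mpr rfl) rfl
    | y i => exact node_of_parent hX _ (.z i) (edge2_zy.mpr rfl) rfl
    | x i j =>
      by_cases hb : i = b j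
      · subst hb
        apply ci_of_funDep_left
        refine ⟨fun g => F j (fun a : {a // a ∈ A j} =>
          g ⟨BNode.x a.1 j, show edge2 n k C2 A b (BNode.x a.1 j) (BNode.x (b j) j) from ⟨rfl, rfl, a.2⟩⟩), fun ω hω => ?_⟩
        show X (.x (b j) j) ω = F j (fun a : {a // a ∈ A j} => X (.x a.1 j) ω)
        have h1 := hF j ω hω
        rw [hX]
        show V (b j) ω = _
        rw [h1]
        rfl
      · exact node_of_parent hX _ (.u i) (edge2_ux.mpr ⟨rfl, hb⟩) rfl
    | u i =>
      by_cases hi : i ∈ C2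
      · have hc : ∀ ω ω', (fun v : parentSet (edge2 n k C2 A b) (.u i) => X v.1 ω)
            = (fun v : parentSet (edge2 n k C2 A b) (.u i) => X v.1 ω') := by
          intro ω ω'
          funext v
          exact absurd v.2 (pa2_u_mem_iff C2 A b hi v.1)
        apply ci_of_indep_const hc
        have hK := hMI2 i hi
        -- first map to the zeroed version, then reconstruct the b-form coordinates
        have hstep1 : Indep μ (X (.u i))
            (fun ω => fun v : nonDescSet (edge2 n k C2 A b) (.u i) =>
              if bform b v.1 then 0 else X v.1 ω) :=
          indep_map_right hK
            (φ := fun g => fun v : nonDescSet (edge2 n k C2 A b) (.u i) =>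
              if h : bform b v.1 then 0 else
                g ⟨bidx v.1, ((ndsub2_u_mem C2 A b hi hbA v.2).1 h).1,
                  ((ndsub2_u_mem C2 A b hi hbA v.2).1 h).2⟩)
            (fun ω _ => by
              funext v
              beta_reduce
              by_cases h : bform b v.1
              · have e1 : (if bform b v.1 then 0 else X v.1 ω) = 0 := if_pos h
                rw [e1]
                try rw [dif_pos h]
              · have e1 : (if bform b v.1 then 0 else X v.1 ω) = X v.1 ω := if_neg h
                rw [e1]
                try rw [dif_neg h]
                try rfl)
        exact indep_map_right hstep1
          (φ := fun g => fun v : nonDescSet (edge2 n k C2 A b) (.u i) =>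
            if h : bform b v.1 then
              F h.choose (fun a : {a // a ∈ A h.choose} =>
                if ha : (BNode.x a.1 h.choose : BNode n k)
                    ∈ nonDescSet (edge2 n k C2 A b) (.u i) then
                  g ⟨BNode.x a.1 h.choose, ha⟩ else 0)
            else g v)
          (fun ω hω => by
            funext v
            beta_reduce
            by_cases h : bform b v.1
            · rw [dif_pos h]
              have hspec : v.1 = BNode.x (b h.choose) h.choose := h.choose_spec
              have hrec := (ndsub2_u_mem C2 A b hi hbA v.2).2 h.choose hspec
              have hinner : (fun a : {a // a ∈ A h.choose} =>
                  if ha : (BNode.x a.1 h.choose : BNode n k)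
                      ∈ nonDescSet (edge2 n k C2 A b) (.u i) then
                    (if bform b (BNode.x a.1 h.choose : BNode n k) then 0
                      else X (BNode.x a.1 h.choose) ω) else 0)
                  = fun a : {a // a ∈ A h.choose} => V a.1 ω := by
                funext a
                have hnd := (hrec a.1 a.2).2.2
                rw [dif_pos hnd]
                have hnb : ¬ bform b (BNode.x a.1 h.choose : BNode n k) := by
                  rw [bform_x_iff]
                  exact fun hc => hbA h.choose (hc ▸ a.2)
                rw [if_neg hnb]
                rfl
              rw [hinner]
              have h1 := hF h.choose ω hω
              have hb1 : X v.1 ω = V (b h.choose) ω :=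
                congrArg (fun w => V (bidx w) ω) h.choose_spec
              rw [hb1, h1]
              rfl
            · rw [dif_neg h, if_neg h])
      · apply ci_of_funDep_right
        refine ⟨fun g => fun v : nonDescSet (edge2 n k C2 A b) (.u i) =>
          if h : bform b v.1 then
            F h.choose (fun a : {a // a ∈ A h.choose} =>
              g ⟨BNode.u a.1,
                (ndsub2_u_not C2 A b hi hbA v.2).2 h.choose h.choose_spec a.1 a.2⟩)
          else g ⟨BNode.u (bidx v.1), (ndsub2_u_not C2 A b hi hbA v.2).1 h⟩,
          fun ω hω => ?_⟩
        funext v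
        beta_reduce
        by_cases h : bform b v.1
        · rw [dif_pos h]
          have h1 := hF h.choose ω hω
          have hb1 : X v.1 ω = V (b h.choose) ω :=
            congrArg (fun w => V (bidx w) ω) h.choose_spec
          rw [hb1, h1]
          rfl
        · rw [dif_neg h]
          rfl
  -- apply the hypothesis L
  have hCI := L Ω μ X hfinX hBN1 hBN2
  -- X (.y i) is definitionally V i
  obtain ⟨j1, hA1, hb1⟩ := hentry1
  obtain ⟨j2, hA2, hb2⟩ := hentry2
  -- V b0' is a function of V b0 and vice versa
  have hg1 : ∀ ω ∈ μ.support, V b0' ω = F j1 (fun _ : {a // a ∈ A j1} => V b0 ω) := by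
    intro ω hω
    have h1 := hF j1 ω hω
    rw [hb1] at h1
    rw [h1]
    congr 1
    funext a
    have : a.1 = b0 := by
      have h2 : (a : Fin n) ∈ ({b0} : Finset (Fin n)) := by rw [← hA1]; exact a.2
      exact Finset.mem_singleton.mp h2
    show V a.1 ω = V b0 ω
    rw [this]
  have hg2 : ∀ ω ∈ μ.support, V b0 ω = F j2 (fun _ : {a // a ∈ A j2} => V b0' ω) := by
    intro ω hω
    have h1 := hF j2 ω hω
    rw [hb2] at h1
    rw [h1]
    congr 1
    funext a
    have : a.1 = b0' := by
      have h2 : (a : Fin n) ∈ ({b0'} : Finset (Fin n)) := by rw [← hA2]; exact a.2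
      exact Finset.mem_singleton.mp h2
    show V a.1 ω = V b0' ω
    rw [this]
  -- conclude functional dependence
  apply funDep_of_fiber_const
  intro ω hω ω' hω' hEq
  have hciv := hCI (V b0 ω) (V b0' ω') (V a0 ω)
  have hpos1 : 0 < pr μ {ω₁ | X (.y b0) ω₁ = V b0 ω ∧ X (.y a0) ω₁ = V a0 ω} :=
    pr_pos hω ⟨rfl, rfl⟩
  have hpos2 : 0 < pr μ {ω₁ | X (.y b0') ω₁ = V b0' ω' ∧ X (.y a0) ω₁ = V a0 ω} :=
    pr_pos hω' ⟨rfl, hEq.symm⟩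
  have htri : pr μ {ω₁ | X (.y b0) ω₁ = V b0 ω ∧ X (.y b0') ω₁ = V b0' ω'
      ∧ X (.y a0) ω₁ = V a0 ω} ≠ 0 := by
    intro hc
    rw [hc, zero_mul] at hciv
    exact (mul_ne_zero hpos1.ne' hpos2.ne') hciv.symm
  obtain ⟨ω₁, hω₁, hm1, hm2, hm3⟩ :=
    exists_mem_of_pr_pos (pos_iff_ne_zero.mpr htri)
  calc V b0 ω = V b0 ω₁ := by
        have : X (.y b0) ω₁ = V b0 ω := hm1
        exact this.symm
  _ = F j2 (fun _ : {a // a ∈ A j2} => V b0' ω₁) := hg2 ω₁ hω₁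
  _ = F j2 (fun _ : {a // a ∈ A j2} => V b0' ω') := by
        have : X (.y b0') ω₁ = V b0' ω' := hm2
        rw [show V b0' ω₁ = V b0' ω' from this]
  _ = V b0 ω' := (hg2 ω' hω').symm

end Comp

/-- Theorem 10 of the paper: Networks 1 and 2 imply the conditional independency
`Y_{b_0} ⊥⊥ Y_{b_0'} | Y_{A_0}` (with `A_0 = {a_0}`) if and only if the implication of
Corollary 8 holds: every tuple `V_1,…,V_n` of finitely supported random variables with
`(V_i)_{i ∈ C1}` mutually independent, `(V_i)_{i ∈ C2}` mutually independent, and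
`V_{b_j} ≤ι V_{A_j}` for `j = 1,…,k`, satisfies `V_{b_0} ≤ι V_{a_0}`. -/
theorem networks_CI_iff_implication (n k : ℕ) (hn : 2 ≤ n) (hk : 1 ≤ k)
    (C1 C2 : Finset (Fin n)) (hC : Disjoint C1 C2)
    (A : Fin k → Finset (Fin n)) (b : Fin k → Fin n) (hb : ∀ j, b j ∉ A j)
    (a0 b0 b0' : Fin n)
    (hb0 : b0 ≠ a0) (hb0'a : b0' ≠ a0) (hb0'b : b0' ≠ b0)
    (hentry1 : ∃ j : Fin k, A j = {b0} ∧ b j = b0')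
    (hentry2 : ∃ j : Fin k, A j = {b0'} ∧ b j = b0) :
    (∀ (Ω : Type) (μ : PMF Ω) (X : BNode n k → Ω → ℕ),
        (∀ v, FinSupp μ (X v)) →
        SatisfiesBN μ X (edge1 n k C1) →
        SatisfiesBN μ X (edge2 n k C2 A b) →
        CondIndep μ (X (.y b0)) (X (.y b0')) (X (.y a0))) ↔
    (∀ (Ω : Type) (μ : PMF Ω) (V : Fin n → Ω → ℕ),
        (∀ i, FinSupp μ (V i)) →
        MutIndepOn μ V C1 → MutIndepOn μ V C2 →
        (∀ j : Fin k, FunDep μ (jointFin V (A j)) (V (b j))) →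
        FunDep μ (V a0) (V b0)) := by
  constructor
  · intro L Ω μ V hVfin hMI1 hMI2 hfd
    exact completeness_main hk C1 C2 A b hb a0 b0 b0' hentry1 hentry2 L μ V hVfin hMI1 hMI2 hfd
  · intro R Ω μ X hfin hBN1 hBN2
    exact soundness_main hk C1 C2 A b hb a0 b0 b0' hb0 hb0'a hb0'b R Ω μ X hfin hBN1 hBN2

end Paper
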